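/- arXiv:2010.12292 — 6 statements merged into one kernel-verified Lean document; each statement's English description precedes it below -/
import Mathlib

section
/- Let f = (1/n)∑ᵢ fᵢ where each fᵢ : R^d → R is convex, differentiable, and L-smooth, and let x* be a minimizer of f. Then for every x in R^d, (1/n)∑ᵢ ‖∇fᵢ(x)‖² ≤ 4L(f(x) − f(x*)) + (2/n)∑ᵢ ‖∇fᵢ(x*)‖². -/
open scoped RealInnerProductSpace
open InnerProductSpace Set

section helpers

variable {E : Type*} [NormedAddCommGroup E] [InnerProductSpace ℝ E] [CompleteSpace E]

lemma line_hasDerivAt' {f : E → ℝ} {g : E → E}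
    (hg : ∀ z, HasGradientAt f (g z) z) (x v : E) (t : ℝ) :
    HasDerivAt (fun s : ℝ => f (x + s • v)) ⟪g (x + t • v), v⟫ t := by
  have h1 : HasDerivAt (fun s : ℝ => x + s • v) v t := by
    simpa using ((hasDerivAt_id t).smul_const v).const_add x
  have h2 : HasFDerivAt f (toDual ℝ E (g (x + t • v))) (x + t • v) := hg _
  simpa [InnerProductSpace.toDual_apply_apply, Function.comp_def] using h2.comp_hasDerivAt t h1

lemma conv_ineq' {f : E → ℝ} {g : E → E} (hconv : ConvexOn ℝ Set.univ f)
    (hg : ∀ z, HasGradientAt f (g z) z) (x y : E) :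
    f x + ⟪g x, y - x⟫ ≤ f y := by
  have hline : ConvexOn ℝ Set.univ (fun t : ℝ => f (x + t • (y - x))) := by
    have h := hconv.comp_affineMap (AffineMap.lineMap x y : ℝ →ᵃ[ℝ] E)
    have he : (fun t : ℝ => f (x + t • (y - x))) = f ∘ (AffineMap.lineMap x y : ℝ →ᵃ[ℝ] E) := by
      funext t
      simp [AffineMap.lineMap_apply, add_comm]
    rw [he]
    simpa using h
  have hd : HasDerivAt (fun t : ℝ => f (x + t • (y - x))) ⟪g x, y - x⟫ 0 := by
    have := line_hasDerivAt' hg x (y - x) 0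
    simpa using this
  have hs := hline.le_slope_of_hasDerivAt (mem_univ (0 : ℝ)) (mem_univ (1 : ℝ)) one_pos hd
  simp only [slope_def_field] at hs
  have h1 : x + (1 : ℝ) • (y - x) = y := by simp
  have h0 : x + (0 : ℝ) • (y - x) = x := by simp
  rw [h1, h0] at hs
  have : ⟪g x, y - x⟫ ≤ f y - f x := by
    simpa [div_eq_mul_inv] using hs
  linarith

lemma descent' {f : E → ℝ} {g : E → E} (hg : ∀ z, HasGradientAt f (g z) z)
    {L : ℝ} (hL : 0 ≤ L) (hlip : ∀ a b, ‖g a - g b‖ ≤ L * ‖a - b‖) (x y : E) :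
    f y ≤ f x + ⟪g x, y - x⟫ + L / 2 * ‖y - x‖ ^ 2 := by
  set v := y - x with hv
  set φ : ℝ → ℝ := fun t => f (x + t • v) - t * ⟪g x, v⟫ - L / 2 * t ^ 2 * ‖v‖ ^ 2 with hφ
  have hφd : ∀ t : ℝ, HasDerivAt φ
      (⟪g (x + t • v), v⟫ - ⟪g x, v⟫ - L * t * ‖v‖ ^ 2) t := by
    intro t
    have h1 := line_hasDerivAt' hg x v t
    have h2 : HasDerivAt (fun t : ℝ => t * ⟪g x, v⟫) ⟪g x, v⟫ t := by
      simpa using (hasDerivAt_id t).mul_const ⟪g x, v⟫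
    have h3 : HasDerivAt (fun t : ℝ => L / 2 * t ^ 2 * ‖v‖ ^ 2) (L * t * ‖v‖ ^ 2) t := by
      have := ((hasDerivAt_pow 2 t).const_mul (L / 2)).mul_const (‖v‖ ^ 2)
      convert this using 1
      · rfl
      · rfl
      · push_cast
        ring
    exact (h1.sub h2).sub h3
  have anti : AntitoneOn φ (Icc (0 : ℝ) 1) := by
    apply antitoneOn_of_deriv_nonpos (convex_Icc 0 1)
    · exact fun t _ => ((hφd t).continuousAt).continuousWithinAt
    · intro t _
      exact (hφd t).differentiableAt.differentiableWithinAt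
    · intro t ht
      rw [interior_Icc] at ht
      rw [(hφd t).deriv]
      have hb : ⟪g (x + t • v) - g x, v⟫ ≤ L * t * ‖v‖ ^ 2 := by
        calc ⟪g (x + t • v) - g x, v⟫ ≤ ‖g (x + t • v) - g x‖ * ‖v‖ := real_inner_le_norm _ _
          _ ≤ (L * ‖(x + t • v) - x‖) * ‖v‖ := by
              exact mul_le_mul_of_nonneg_right (hlip _ _) (norm_nonneg _)
          _ = L * t * ‖v‖ ^ 2 := by
              rw [add_sub_cancel_left, norm_smul]
              simp [abs_of_pos ht.1]
              ring
      rw [inner_sub_left] at hb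
      linarith
  have h01 := anti (left_mem_Icc.mpr zero_le_one) (right_mem_Icc.mpr zero_le_one) zero_le_one
  have hφ0 : φ 0 = f x := by simp [hφ]
  have hφ1 : φ 1 = f y - ⟪g x, v⟫ - L / 2 * ‖v‖ ^ 2 := by
    simp [hφ, hv]
  rw [hφ0, hφ1] at h01
  linarith

lemma cocoercive' {f : E → ℝ} {g : E → E} (hconv : ConvexOn ℝ Set.univ f)
    (hg : ∀ z, HasGradientAt f (g z) z)
    {L : ℝ} (hL : 0 < L) (hlip : ∀ a b, ‖g a - g b‖ ≤ L * ‖a - b‖) (x y : E) :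
    ‖g x - g y‖ ^ 2 ≤ 2 * L * (f x - f y - ⟪g y, x - y⟫) := by
  set φ : E → ℝ := fun z => f z - ⟪g y, z⟫ with hφ
  set G : E → E := fun z => g z - g y with hG
  have hGg : ∀ z, HasGradientAt φ (G z) z := by
    intro z
    have h1 : HasFDerivAt f (toDual ℝ E (g z)) z := hg z
    have h2 : HasFDerivAt (fun w : E => ⟪g y, w⟫) (toDual ℝ E (g y)) z :=
      (toDual ℝ E (g y)).hasFDerivAt
    have := h1.sub h2
    unfold HasGradientAt HasGradientAtFilter
    exact (by simpa [hφ, hG, map_sub, Pi.sub_def] using this : HasFDerivAt φ (toDual ℝ E (G z)) z)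
  have hGlip : ∀ a b, ‖G a - G b‖ ≤ L * ‖a - b‖ := by
    intro a b
    simpa [hG, sub_sub_sub_cancel_right] using hlip a b
  -- minimality of φ at y
  have hmin : ∀ z, φ y ≤ φ z := by
    intro z
    have h := conv_ineq' hconv hg y z
    simp only [hφ]
    have hi : ⟪g y, z - y⟫ = ⟪g y, z⟫ - ⟪g y, y⟫ := by rw [inner_sub_right]
    rw [hi] at h
    linarith
  -- descent step
  have hstep := descent' hGg hL.le hGlip x (x - (1 / L) • G x)
  have hinner : ⟪G x, (x - (1 / L) • G x) - x⟫ = -(1 / L) * ‖G x‖ ^ 2 := by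
    rw [sub_sub_cancel_left, inner_neg_right, real_inner_smul_right, real_inner_self_eq_norm_sq]
    ring
  have hnorm : ‖(x - (1 / L) • G x) - x‖ ^ 2 = (1 / L) ^ 2 * ‖G x‖ ^ 2 := by
    rw [sub_sub_cancel_left, norm_neg, norm_smul]
    rw [mul_pow, Real.norm_eq_abs, sq_abs]
  rw [hinner, hnorm] at hstep
  have hkey : φ y ≤ φ x - 1 / (2 * L) * ‖G x‖ ^ 2 := by
    have h2 := hmin (x - (1 / L) • G x)
    have hLne : L ≠ 0 := ne_of_gt hL
    have : φ x + -(1 / L) * ‖G x‖ ^ 2 + L / 2 * ((1 / L) ^ 2 * ‖G x‖ ^ 2)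
        = φ x - 1 / (2 * L) * ‖G x‖ ^ 2 := by
      field_simp
      ring
    linarith [this ▸ hstep]
  have hφxy : φ x - φ y = f x - f y - ⟪g y, x - y⟫ := by
    simp only [hφ, inner_sub_right]
    ring
  have hfin : 1 / (2 * L) * ‖G x‖ ^ 2 ≤ φ x - φ y := by linarith
  have h2L : (0:ℝ) < 2 * L := by linarith
  calc ‖g x - g y‖ ^ 2 = (2 * L) * (1 / (2 * L) * ‖G x‖ ^ 2) := by
        field_simp [hG]
        rfl
    _ ≤ (2 * L) * (φ x - φ y) := by
        exact mul_le_mul_of_nonneg_left hfin h2L.le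
    _ = 2 * L * (f x - f y - ⟪g y, x - y⟫) := by rw [hφxy]

end helpers

theorem avg_grad_norm_sq_bound (d n : ℕ) (hn : 0 < n) (L : ℝ) (hL : 0 < L)
    (f : Fin n → EuclideanSpace ℝ (Fin d) → ℝ)
    (g : Fin n → EuclideanSpace ℝ (Fin d) → EuclideanSpace ℝ (Fin d))
    (hconv : ∀ i, ConvexOn ℝ Set.univ (f i))
    (hgrad : ∀ i x, HasGradientAt (f i) (g i x) x)
    (hlip : ∀ i x y, ‖g i x - g i y‖ ≤ L * ‖x - y‖)
    (xstar : EuclideanSpace ℝ (Fin d))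
    (hmin : ∀ y, (1 / n : ℝ) * ∑ i, f i xstar ≤ (1 / n : ℝ) * ∑ i, f i y)
    (x : EuclideanSpace ℝ (Fin d)) :
    (1 / n : ℝ) * ∑ i, ‖g i x‖ ^ 2 ≤
      4 * L * ((1 / n : ℝ) * ∑ i, f i x - (1 / n : ℝ) * ∑ i, f i xstar)
        + (2 / n : ℝ) * ∑ i, ‖g i xstar‖ ^ 2 := by
  have hnR : (0:ℝ) < (n:ℝ) := by exact_mod_cast hn
  -- sum of gradients at xstar is zero
  have hsumF : HasFDerivAt (fun y : EuclideanSpace ℝ (Fin d) => ∑ i, f i y)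
      (∑ i, toDual ℝ (EuclideanSpace ℝ (Fin d)) (g i xstar)) xstar :=
    HasFDerivAt.fun_sum (fun i _ => hasGradientAt_iff_hasFDerivAt.mp (hgrad i xstar))
  have hminsum : IsLocalMin (fun y : EuclideanSpace ℝ (Fin d) => ∑ i, f i y) xstar := by
    apply IsMinOn.isLocalMin _ (Filter.univ_mem)
    intro y _
    have h := hmin y
    have := mul_le_mul_of_nonneg_left h (le_of_lt hnR)
    simp only []
    have hne : (n:ℝ) ≠ 0 := ne_of_gt hnR
    calc ∑ i, f i xstar = (n:ℝ) * ((1/n:ℝ) * ∑ i, f i xstar) := by field_simp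
      _ ≤ (n:ℝ) * ((1/n:ℝ) * ∑ i, f i y) := by
          exact mul_le_mul_of_nonneg_left h hnR.le
      _ = ∑ i, f i y := by field_simp
  have hder0 : (∑ i, toDual ℝ (EuclideanSpace ℝ (Fin d)) (g i xstar)) = 0 :=
    hminsum.hasFDerivAt_eq_zero hsumF
  have hgsum : (∑ i, g i xstar) = 0 := by
    have : toDual ℝ (EuclideanSpace ℝ (Fin d)) (∑ i, g i xstar) = 0 := by
      rw [map_sum]; exact hder0
    have h2 := congrArg (toDual ℝ (EuclideanSpace ℝ (Fin d))).symm this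
    simpa using h2
  have hinner0 : ∑ i, ⟪g i xstar, x - xstar⟫ = 0 := by
    rw [← sum_inner, hgsum, inner_zero_left]
  -- per-index bound
  have hper : ∀ i, ‖g i x‖ ^ 2 ≤
      4 * L * (f i x - f i xstar - ⟪g i xstar, x - xstar⟫) + 2 * ‖g i xstar‖ ^ 2 := by
    intro i
    have hco := cocoercive' (hconv i) (hgrad i) hL (hlip i) x xstar
    have htri : ‖g i x‖ ^ 2 ≤ 2 * ‖g i x - g i xstar‖ ^ 2 + 2 * ‖g i xstar‖ ^ 2 := by
      have h1 : ‖g i x‖ ≤ ‖g i x - g i xstar‖ + ‖g i xstar‖ := by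
        simpa using norm_add_le (g i x - g i xstar) (g i xstar)
      nlinarith [norm_nonneg (g i x - g i xstar), norm_nonneg (g i xstar),
        sq_nonneg (‖g i x - g i xstar‖ - ‖g i xstar‖), norm_nonneg (g i x)]
    nlinarith [hco, htri]
  have hsum : ∑ i, ‖g i x‖ ^ 2 ≤
      4 * L * (∑ i, f i x - ∑ i, f i xstar) + 2 * ∑ i, ‖g i xstar‖ ^ 2 := by
    have h := Finset.sum_le_sum (s := Finset.univ) (fun i _ => hper i)
    have hrw : ∑ i, (4 * L * (f i x - f i xstar - ⟪g i xstar, x - xstar⟫)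
        + 2 * ‖g i xstar‖ ^ 2)
        = 4 * L * (∑ i, f i x - ∑ i, f i xstar - ∑ i, ⟪g i xstar, x - xstar⟫)
          + 2 * ∑ i, ‖g i xstar‖ ^ 2 := by
      rw [Finset.sum_add_distrib, ← Finset.mul_sum, ← Finset.mul_sum]
      congr 2
      rw [Finset.sum_sub_distrib, Finset.sum_sub_distrib]
    rw [hrw, hinner0] at h
    linarith
  have hrhs : 4 * L * ((1 / n : ℝ) * ∑ i, f i x - (1 / n : ℝ) * ∑ i, f i xstar)
      + (2 / n : ℝ) * ∑ i, ‖g i xstar‖ ^ 2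
      = (1 / n : ℝ) * (4 * L * (∑ i, f i x - ∑ i, f i xstar) + 2 * ∑ i, ‖g i xstar‖ ^ 2) := by
    ring
  rw [hrhs]
  exact mul_le_mul_of_nonneg_left hsum (by positivity)
end

section
/- Let f : R^d → R be L-smooth and μ-strongly quasi-convex with unique minimizer x* and μ > 0. Then for the average f = (1/n)∑ᵢ fᵢ of possibly non-convex L-smooth functions fᵢ, one has for every x: (1/n)∑ᵢ ‖∇fᵢ(x)‖² ≤ 4(L²/μ)(f(x) − f(x*)) + (2/n)∑ᵢ ‖∇fᵢ(x*)‖². -/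
open scoped RealInnerProductSpace

set_option maxHeartbeats 1000000 in
theorem avg_grad_norm_sq_bound_quasi_strong (d n : ℕ) (hn : 0 < n) (L μ : ℝ)
    (hL : 0 < L) (hμ : 0 < μ)
    (f : Fin n → EuclideanSpace ℝ (Fin d) → ℝ)
    (g : Fin n → EuclideanSpace ℝ (Fin d) → EuclideanSpace ℝ (Fin d))
    (hgrad : ∀ i x, HasGradientAt (f i) (g i x) x)
    (hlip : ∀ i x y, ‖g i x - g i y‖ ≤ L * ‖x - y‖)
    (xstar : EuclideanSpace ℝ (Fin d))
    (hmin : ∀ y, (1 / n : ℝ) * ∑ i, f i xstar ≤ (1 / n : ℝ) * ∑ i, f i y)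
    (huniq : ∀ y, ((1 / n : ℝ) * ∑ i, f i y = (1 / n : ℝ) * ∑ i, f i xstar) → y = xstar)
    (hqsc : ∀ y, (1 / n : ℝ) * ∑ i, f i y
        + ⟪(1 / n : ℝ) • ∑ i, g i y, xstar - y⟫
        + μ / 2 * ‖y - xstar‖ ^ 2 ≤ (1 / n : ℝ) * ∑ i, f i xstar)
    (x : EuclideanSpace ℝ (Fin d)) :
    (1 / n : ℝ) * ∑ i, ‖g i x‖ ^ 2 ≤
      4 * (L ^ 2 / μ) * ((1 / n : ℝ) * ∑ i, f i x - (1 / n : ℝ) * ∑ i, f i xstar)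
        + (2 / n : ℝ) * ∑ i, ‖g i xstar‖ ^ 2 := by
  have hn' : (0:ℝ) < n := by exact_mod_cast hn
  set v : EuclideanSpace ℝ (Fin d) := x - xstar with hv
  set c : ℝ := μ / 2 * ‖v‖ ^ 2 with hc
  set ψ : ℝ → ℝ := fun t => (1 / n : ℝ) * ∑ i, f i (xstar + t • v) with hψdef
  set D : ℝ → ℝ := fun t => ⟪(1 / n : ℝ) • ∑ i, g i (xstar + t • v), v⟫ with hDdef
  have hψ0 : ψ 0 = (1 / n : ℝ) * ∑ i, f i xstar := by simp [hψdef]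
  have hψ1 : ψ 1 = (1 / n : ℝ) * ∑ i, f i x := by simp [hψdef, hv]
  -- derivative of ψ
  have hψ : ∀ t : ℝ, HasDerivAt ψ (D t) t := by
    intro t
    have hline : HasDerivAt (fun s : ℝ => xstar + s • v) v t := by
      simpa using ((hasDerivAt_id t).smul_const v).const_add xstar
    have hsum : HasDerivAt (fun s : ℝ => ∑ i, f i (xstar + s • v))
        (∑ i, ⟪g i (xstar + t • v), v⟫) t := by
      apply HasDerivAt.fun_sum
      intro i _
      have hf : HasFDerivAt (f i)
          (InnerProductSpace.toDual ℝ _ (g i (xstar + t • v))) (xstar + t • v) :=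
        hasGradientAt_iff_hasFDerivAt.mp (hgrad i _)
      simpa [InnerProductSpace.toDual_apply_apply, Function.comp_def] using hf.comp_hasDerivAt t hline
    have := hsum.const_mul (1 / n : ℝ)
    refine this.congr_deriv ?_
    rw [hDdef]
    simp only [real_inner_smul_left, sum_inner]
  -- key inequality from hqsc along the segment
  have hkey : ∀ t : ℝ, ψ t - t * D t + c * t ^ 2 ≤ ψ 0 := by
    intro t
    have h := hqsc (xstar + t • v)
    have h1 : xstar - (xstar + t • v) = -(t • v) := by abel
    have h2 : ⟪(1 / n : ℝ) • ∑ i, g i (xstar + t • v), xstar - (xstar + t • v)⟫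
        = -(t * D t) := by
      rw [h1, inner_neg_right, real_inner_smul_right]
    have h3 : ‖xstar + t • v - xstar‖ ^ 2 = t ^ 2 * ‖v‖ ^ 2 := by
      have : xstar + t • v - xstar = t • v := by abel
      rw [this, norm_smul]
      simp [mul_pow, sq_abs]
    rw [h2, h3] at h
    rw [hψ0, hψdef]
    simp only at h ⊢
    nlinarith [h]
  -- the auxiliary function A and its monotonicity
  set A : ℝ → ℝ := fun t => (ψ t - ψ 0) / t - c * t with hAdef
  have hA' : ∀ t : ℝ, 0 < t →
      HasDerivAt A ((D t * t - (ψ t - ψ 0)) / t ^ 2 - c) t := by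
    intro t ht
    have h1 : HasDerivAt (fun s => (ψ s - ψ 0) / s)
        ((D t * t - (ψ t - ψ 0) * 1) / t ^ 2) t :=
      HasDerivAt.div ((hψ t).sub_const (ψ 0)) (hasDerivAt_id t) (ne_of_gt ht)
    have h2 : HasDerivAt (fun s : ℝ => c * s) c t := by
      simpa using (hasDerivAt_id t).const_mul c
    exact (h1.sub h2).congr_deriv (by ring)
  have hderiv_nonneg : ∀ t : ℝ, 0 < t → 0 ≤ (D t * t - (ψ t - ψ 0)) / t ^ 2 - c := by
    intro t ht
    have hk := hkey t
    have h1 : c * t ^ 2 ≤ D t * t - (ψ t - ψ 0) := by nlinarith [hk]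
    have h2 : c ≤ (D t * t - (ψ t - ψ 0)) / t ^ 2 :=
      (le_div_iff₀ (by positivity)).mpr (by linarith)
    linarith
  have hmono : ∀ t0 : ℝ, 0 < t0 → t0 ≤ 1 → A t0 ≤ A 1 := by
    intro t0 ht0 ht1
    have hmo : MonotoneOn A (Set.Icc t0 1) := by
      apply monotoneOn_of_deriv_nonneg (convex_Icc t0 1)
      · intro t ht
        exact ((hA' t (lt_of_lt_of_le ht0 ht.1)).differentiableAt).continuousAt.continuousWithinAt
      · intro t ht
        rw [interior_Icc] at ht
        exact ((hA' t (lt_trans ht0 ht.1)).differentiableAt).differentiableWithinAt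
      · intro t ht
        rw [interior_Icc] at ht
        have htpos : 0 < t := lt_trans ht0 ht.1
        rw [(hA' t htpos).deriv]
        exact hderiv_nonneg t htpos
    exact hmo (Set.mem_Icc.mpr ⟨le_refl t0, ht1⟩) (Set.mem_Icc.mpr ⟨ht1, le_refl 1⟩) ht1
  have hlow : ∀ t0 : ℝ, 0 < t0 → t0 ≤ 1 → -(c * t0) ≤ A 1 := by
    intro t0 ht0 ht1
    have hψge : ψ 0 ≤ ψ t0 := by rw [hψ0, hψdef]; exact hmin _
    have : -(c * t0) ≤ A t0 := by
      rw [hAdef]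
      simp only
      have : 0 ≤ (ψ t0 - ψ 0) / t0 := div_nonneg (by linarith) (le_of_lt ht0)
      linarith
    linarith [hmono t0 ht0 ht1]
  -- take limit t0 → 0⁺
  have hA1 : 0 ≤ A 1 := by
    have htend : Filter.Tendsto (fun t : ℝ => -(c * t)) (nhdsWithin 0 (Set.Ioi 0))
        (nhds 0) := by
      have : Filter.Tendsto (fun t : ℝ => -(c * t)) (nhds 0) (nhds (-(c * 0))) := by
        exact ((continuous_const.mul continuous_id).neg).tendsto 0
      simpa using this.mono_left nhdsWithin_le_nhds
    refine le_of_tendsto htend ?_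
    filter_upwards [Ioc_mem_nhdsGT (by norm_num : (0:ℝ) < 1)] with t ht
    exact hlow t ht.1 ht.2
  -- quadratic growth
  have hQG : μ / 2 * ‖x - xstar‖ ^ 2 ≤
      (1 / n : ℝ) * ∑ i, f i x - (1 / n : ℝ) * ∑ i, f i xstar := by
    have : A 1 = ψ 1 - ψ 0 - c := by rw [hAdef]; simp
    rw [this] at hA1
    rw [← hv, ← hc, ← hψ1, ← hψ0]
    linarith
  -- per-coordinate bound
  have hper : ∀ i, ‖g i x‖ ^ 2 ≤ 2 * L ^ 2 * ‖x - xstar‖ ^ 2 + 2 * ‖g i xstar‖ ^ 2 := by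
    intro i
    have h1 : ‖g i x‖ ≤ ‖g i x - g i xstar‖ + ‖g i xstar‖ := by
      simpa using norm_add_le (g i x - g i xstar) (g i xstar)
    have h2 : ‖g i x - g i xstar‖ ≤ L * ‖x - xstar‖ := hlip i x xstar
    have h3 : ‖g i x‖ ≤ L * ‖x - xstar‖ + ‖g i xstar‖ := by linarith
    have h4 : ‖g i x‖ * ‖g i x‖ ≤ (L * ‖x - xstar‖ + ‖g i xstar‖) * (L * ‖x - xstar‖ + ‖g i xstar‖) :=
      mul_le_mul h3 h3 (norm_nonneg _) (by positivity)
    nlinarith [h4, sq_nonneg (L * ‖x - xstar‖ - ‖g i xstar‖)]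
  have hsum : ∑ i, ‖g i x‖ ^ 2 ≤
      (n : ℝ) * (2 * L ^ 2 * ‖x - xstar‖ ^ 2) + 2 * ∑ i, ‖g i xstar‖ ^ 2 := by
    calc ∑ i, ‖g i x‖ ^ 2
        ≤ ∑ i : Fin n, (2 * L ^ 2 * ‖x - xstar‖ ^ 2 + 2 * ‖g i xstar‖ ^ 2) :=
          Finset.sum_le_sum fun i _ => hper i
      _ = (n : ℝ) * (2 * L ^ 2 * ‖x - xstar‖ ^ 2) + 2 * ∑ i, ‖g i xstar‖ ^ 2 := by
          rw [Finset.sum_add_distrib, Finset.sum_const, Finset.mul_sum]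
          simp [nsmul_eq_mul, Finset.mul_sum]
  have hr : 2 * L ^ 2 * ‖x - xstar‖ ^ 2 ≤
      4 * (L ^ 2 / μ) * ((1 / n : ℝ) * ∑ i, f i x - (1 / n : ℝ) * ∑ i, f i xstar) := by
    set Δ : ℝ := (1 / n : ℝ) * ∑ i, f i x - (1 / n : ℝ) * ∑ i, f i xstar with hΔdef
    have h6 : 2 * L ^ 2 * ‖x - xstar‖ ^ 2 * μ ≤ 4 * L ^ 2 * Δ := by
      calc 2 * L ^ 2 * ‖x - xstar‖ ^ 2 * μ
          = 4 * L ^ 2 * (μ / 2 * ‖x - xstar‖ ^ 2) := by ring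
        _ ≤ 4 * L ^ 2 * Δ := mul_le_mul_of_nonneg_left hQG (by positivity)
    have h7 : 2 * L ^ 2 * ‖x - xstar‖ ^ 2 ≤ 4 * L ^ 2 * Δ / μ := (le_div_iff₀ hμ).mpr h6
    rw [show 4 * (L ^ 2 / μ) * Δ = 4 * L ^ 2 * Δ / μ from by ring]
    exact h7
  calc (1 / n : ℝ) * ∑ i, ‖g i x‖ ^ 2
      ≤ (1 / n : ℝ) * ((n : ℝ) * (2 * L ^ 2 * ‖x - xstar‖ ^ 2) + 2 * ∑ i, ‖g i xstar‖ ^ 2) :=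
        mul_le_mul_of_nonneg_left hsum (by positivity)
    _ = 2 * L ^ 2 * ‖x - xstar‖ ^ 2 + (2 / n : ℝ) * ∑ i, ‖g i xstar‖ ^ 2 := by
        field_simp
    _ ≤ 4 * (L ^ 2 / μ) * ((1 / n : ℝ) * ∑ i, f i x - (1 / n : ℝ) * ∑ i, f i xstar)
        + (2 / n : ℝ) * ∑ i, ‖g i xstar‖ ^ 2 := by linarith
end

section
/- Suppose a nonnegative sequence (r_K) satisfies r_K ≤ a/(γK) + b₁γ/K + b₂γ²/K + c₁γ + c₂γ² for all K ≥ 1 and all stepsizes 0 < γ ≤ γ₀, where a > 0 and b₁, b₂, c₁, c₂ ≥ 0. Then choosing γ = min{γ₀, √(a/b₁), (a/b₂)^{1/3}, √(a/(c₁K)), (a/(c₂K))^{1/3}} gives r_K ≤ C·(a/(γ₀K) + √(a b₁)/K + (a² b₂)^{1/3}/K + √(a c₁/K) + (a² c₂)^{1/3}/K^{2/3}) for some absolute constant C. -/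
private lemma aux_sqrt (a b : ℝ) (ha : 0 < a) : a * Real.sqrt (b / a) = Real.sqrt (a * b) := by
  rw [show a * b = a ^ 2 * (b / a) by field_simp, Real.sqrt_mul (sq_nonneg a),
    Real.sqrt_sq ha.le]

private lemma aux_rpow (a b : ℝ) (ha : 0 < a) (hb : 0 ≤ b) :
    a * (b / a) ^ ((1 : ℝ) / 3) = (a ^ 2 * b) ^ ((1 : ℝ) / 3) := by
  rw [show a ^ 2 * b = a ^ 3 * (b / a) by field_simp,
    Real.mul_rpow (by positivity) (by positivity),
    ← Real.rpow_natCast a 3, ← Real.rpow_mul ha.le]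
  norm_num

theorem stepsize_tuning_convex :
    ∃ C : ℝ, 0 < C ∧
      ∀ (γ₀ a b₁ b₂ c₁ c₂ : ℝ) (r : ℕ → ℝ),
        0 < γ₀ → 0 < a → 0 ≤ b₁ → 0 ≤ b₂ → 0 ≤ c₁ → 0 ≤ c₂ →
        (∀ K, 0 ≤ r K) →
        (∀ γ : ℝ, 0 < γ → γ ≤ γ₀ → ∀ K : ℕ, 1 ≤ K →
          r K ≤ a / (γ * K) + b₁ * γ / K + b₂ * γ ^ 2 / K + c₁ * γ + c₂ * γ ^ 2) →
        ∀ K : ℕ, 1 ≤ K →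
          r K ≤ C * (a / (γ₀ * K) + Real.sqrt (a * b₁) / K
                + (a ^ 2 * b₂) ^ ((1 : ℝ) / 3) / K
                + Real.sqrt (a * c₁ / (K : ℝ))
                + (a ^ 2 * c₂) ^ ((1 : ℝ) / 3) / (K : ℝ) ^ ((2 : ℝ) / 3)) := by
  refine ⟨2, by norm_num, ?_⟩
  intro γ₀ a b₁ b₂ c₁ c₂ r hγ₀ ha hb₁ hb₂ hc₁ hc₂ hr h K hK
  set k : ℝ := (K : ℝ) with hkdef
  have hk1 : (1 : ℝ) ≤ k := by rw [hkdef]; exact_mod_cast hK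
  have hk0 : (0 : ℝ) < k := lt_of_lt_of_le one_pos hk1
  set s₁ := Real.sqrt (b₁ / a) with hs₁def
  set s₂ := (b₂ / a) ^ ((1 : ℝ) / 3) with hs₂def
  set s₃ := Real.sqrt (c₁ * k / a) with hs₃def
  set s₄ := (c₂ * k / a) ^ ((1 : ℝ) / 3) with hs₄def
  have hs₁ : 0 ≤ s₁ := Real.sqrt_nonneg _
  have hs₂ : 0 ≤ s₂ := Real.rpow_nonneg (by positivity) _
  have hs₃ : 0 ≤ s₃ := Real.sqrt_nonneg _
  have hs₄ : 0 ≤ s₄ := Real.rpow_nonneg (by positivity) _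
  have hg0 : 0 < 1 / γ₀ := by positivity
  set t := 1 / γ₀ + s₁ + s₂ + s₃ + s₄ with htdef
  have ht0 : 0 < t := by positivity
  set γ := 1 / t with hγdef
  have hγpos : 0 < γ := by positivity
  have hγle : γ ≤ γ₀ := by
    rw [hγdef, div_le_iff₀ ht0]
    calc (1 : ℝ) = γ₀ * (1 / γ₀) := by field_simp
    _ ≤ γ₀ * t := by
        apply mul_le_mul_of_nonneg_left _ hγ₀.le
        rw [htdef]; linarith
  have hbound := h γ hγpos hγle K hK
  -- γ * s ≤ 1 for each s ≤ t
  have key : ∀ s : ℝ, 0 ≤ s → s ≤ t → γ * s ≤ 1 := by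
    intro s hs hst
    rw [hγdef, one_div, inv_mul_le_iff₀ ht0]; linarith
  have k1 : γ * s₁ ≤ 1 := key s₁ hs₁ (by rw [htdef]; linarith [hg0])
  have k2 : γ * s₂ ≤ 1 := key s₂ hs₂ (by rw [htdef]; linarith [hg0])
  have k3 : γ * s₃ ≤ 1 := key s₃ hs₃ (by rw [htdef]; linarith [hg0])
  have k4 : γ * s₄ ≤ 1 := key s₄ hs₄ (by rw [htdef]; linarith [hg0])
  -- term 1 : a / (γ * k) = a * t / k
  have T1 : a / (γ * k) = a / (γ₀ * k) + a * s₁ / k + a * s₂ / k + a * s₃ / k + a * s₄ / k := by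
    rw [hγdef, htdef]
    field_simp
  -- squares/cubes of s
  have sq1 : s₁ ^ 2 = b₁ / a := Real.sq_sqrt (by positivity)
  have sq3 : s₃ ^ 2 = c₁ * k / a := Real.sq_sqrt (by positivity)
  have cb2 : s₂ ^ 3 = b₂ / a := by
    rw [hs₂def, ← Real.rpow_natCast ((b₂ / a) ^ ((1:ℝ)/3)) 3, ← Real.rpow_mul (by positivity)]
    norm_num
  have cb4 : s₄ ^ 3 = c₂ * k / a := by
    rw [hs₄def, ← Real.rpow_natCast ((c₂ * k / a) ^ ((1:ℝ)/3)) 3, ← Real.rpow_mul (by positivity)]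
    norm_num
  -- term bounds
  have T2 : b₁ * γ ≤ a * s₁ := by
    have : b₁ * γ = a * s₁ * (γ * s₁) := by
      have : b₁ = a * s₁ ^ 2 := by rw [sq1]; field_simp
      rw [this]; ring
    rw [this]
    calc a * s₁ * (γ * s₁) ≤ a * s₁ * 1 := by
          apply mul_le_mul_of_nonneg_left k1 (by positivity)
    _ = a * s₁ := by ring
  have T3 : b₂ * γ ^ 2 ≤ a * s₂ := by
    have hb : b₂ = a * s₂ ^ 3 := by rw [cb2]; field_simp
    have : b₂ * γ ^ 2 = a * s₂ * (γ * s₂) ^ 2 := by rw [hb]; ring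
    rw [this]
    calc a * s₂ * (γ * s₂) ^ 2 ≤ a * s₂ * 1 := by
          apply mul_le_mul_of_nonneg_left _ (by positivity)
          calc (γ * s₂) ^ 2 ≤ 1 ^ 2 := by
                apply pow_le_pow_left₀ (by positivity) k2
          _ = 1 := one_pow 2
    _ = a * s₂ := by ring
  have T4 : c₁ * γ ≤ a * s₃ / k := by
    have hb : c₁ = a * s₃ ^ 2 / k := by rw [sq3]; field_simp
    have : c₁ * γ = a * s₃ / k * (γ * s₃) := by rw [hb]; ring
    rw [this]
    calc a * s₃ / k * (γ * s₃) ≤ a * s₃ / k * 1 := by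
          apply mul_le_mul_of_nonneg_left k3 (by positivity)
    _ = a * s₃ / k := by ring
  have T5 : c₂ * γ ^ 2 ≤ a * s₄ / k := by
    have hb : c₂ = a * s₄ ^ 3 / k := by rw [cb4]; field_simp
    have : c₂ * γ ^ 2 = a * s₄ / k * (γ * s₄) ^ 2 := by rw [hb]; ring
    rw [this]
    calc a * s₄ / k * (γ * s₄) ^ 2 ≤ a * s₄ / k * 1 := by
          apply mul_le_mul_of_nonneg_left _ (by positivity)
          calc (γ * s₄) ^ 2 ≤ 1 ^ 2 := pow_le_pow_left₀ (by positivity) k4 2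
          _ = 1 := one_pow 2
    _ = a * s₄ / k := by ring
  -- identify the pieces with the target terms
  have E1 : a * s₁ = Real.sqrt (a * b₁) := aux_sqrt a b₁ ha
  have E2 : a * s₂ = (a ^ 2 * b₂) ^ ((1:ℝ)/3) := aux_rpow a b₂ ha hb₂
  have E3 : a * s₃ / k = Real.sqrt (a * c₁ / k) := by
    have h1 : a * s₃ = Real.sqrt (a * (c₁ * k)) := aux_sqrt a (c₁ * k) ha
    rw [h1, show a * (c₁ * k) = a * c₁ / k * k ^ 2 by field_simp,
      Real.sqrt_mul (by positivity), Real.sqrt_sq hk0.le]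
    field_simp
  have E4 : a * s₄ / k = (a ^ 2 * c₂) ^ ((1:ℝ)/3) / k ^ ((2:ℝ)/3) := by
    have h1 : a * s₄ = (a ^ 2 * (c₂ * k)) ^ ((1:ℝ)/3) := aux_rpow a (c₂ * k) ha (by positivity)
    rw [h1, show a ^ 2 * (c₂ * k) = (a ^ 2 * c₂) * k by ring,
      Real.mul_rpow (by positivity) hk0.le]
    rw [div_eq_div_iff hk0.ne' (by positivity : k ^ ((2:ℝ)/3) ≠ 0)]
    rw [mul_assoc, ← Real.rpow_add hk0]
    norm_num
  have final : a / (γ * k) + b₁ * γ / k + b₂ * γ ^ 2 / k + c₁ * γ + c₂ * γ ^ 2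
      ≤ 2 * (a / (γ₀ * k) + a * s₁ / k + a * s₂ / k + a * s₃ / k + a * s₄ / k) := by
    have h2 : b₁ * γ / k ≤ a * s₁ / k := (div_le_div_iff_of_pos_right hk0).mpr T2
    have h3 : b₂ * γ ^ 2 / k ≤ a * s₂ / k := (div_le_div_iff_of_pos_right hk0).mpr T3
    have h45 : a * s₃ / k ≤ a * s₃ / k := le_refl _
    have hpos : 0 ≤ a / (γ₀ * k) := by positivity
    linarith [T1, h2, h3, T4, T5]
  calc r K ≤ a / (γ * k) + b₁ * γ / k + b₂ * γ ^ 2 / k + c₁ * γ + c₂ * γ ^ 2 := hbound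
  _ ≤ 2 * (a / (γ₀ * k) + a * s₁ / k + a * s₂ / k + a * s₃ / k + a * s₄ / k) := final
  _ = 2 * (a / (γ₀ * k) + Real.sqrt (a * b₁) / k + (a ^ 2 * b₂) ^ ((1:ℝ)/3) / k
        + Real.sqrt (a * c₁ / k) + (a ^ 2 * c₂) ^ ((1:ℝ)/3) / k ^ ((2:ℝ)/3)) := by
      rw [E3, E4, ← E1, ← E2]
end

section
/- Let f = (1/n)∑ᵢ fᵢ where fᵢ = (1/m)∑ⱼ f_{ij}, with each f_{ij} convex and L-smooth, and let x* minimize f. With l chosen uniformly from [m] on each worker i, define gᵢ = ∇f_{il}(x) − ∇f_{il}(wᵢ) + ∇fᵢ(wᵢ), and g = (1/n)∑ᵢ gᵢ. Then E[g] = ∇f(x) and E‖g‖² ≤ 4L(f(x) − f(x*)) + 2σ², where σ² = (1/(nm))∑ᵢ∑ⱼ‖∇f_{ij}(wᵢ) − ∇f_{ij}(x*)‖². -/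
open Finset

variable {E : Type*} [NormedAddCommGroup E] [InnerProductSpace ℝ E] [CompleteSpace E]

local notation "⟪" a ", " b "⟫" => inner (𝕜 := ℝ) a b

-- convexity gradient lower bound
lemma convex_grad_le {h : E → ℝ} (hc : ConvexOn ℝ Set.univ h) {z gz : E}
    (hg : HasGradientAt h gz z) (u : E) : h z + ⟪gz, u - z⟫ ≤ h u := by
  have hline : HasDerivAt (fun t : ℝ => z + t • (u - z)) (u - z) 0 := by
    simpa using ((hasDerivAt_id (0:ℝ)).smul_const (u - z)).const_add z
  have hφ : HasDerivAt (fun t : ℝ => h (z + t • (u - z))) ⟪gz, u - z⟫ 0 := by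
    have hz : z = z + (0:ℝ) • (u - z) := by simp
    have hF : HasFDerivAt h ((InnerProductSpace.toDual ℝ E) gz) (z + (0:ℝ) • (u - z)) := by
      rw [← hz]; exact hg.hasFDerivAt
    have := hF.comp_hasDerivAt 0 hline
    simpa [Function.comp_def] using this
  have hcφ : ConvexOn ℝ Set.univ (fun t : ℝ => h (z + t • (u - z))) := by
    have := hc.comp_affineMap (AffineMap.lineMap z u)
    simp only [AffineMap.coe_lineMap] at this
    have h2 : (fun t : ℝ => h (z + t • (u - z))) =
        (h ∘ fun t : ℝ => t • (u - z) +ᵥ z) := by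
      funext t; simp [add_comm, vadd_eq_add]
    rw [h2]
    simpa using this
  have := hcφ.le_slope_of_hasDerivAt (Set.mem_univ 0) (Set.mem_univ 1) one_pos hφ
  rw [slope_def_field] at this
  simp only [zero_smul, add_zero, one_smul] at this
  have h1 : z + (u - z) = u := by abel
  rw [h1] at this
  have : ⟪gz, u - z⟫ ≤ h u - h z := by
    simpa [div_one] using this
  linarith

-- descent lemma
lemma descent_lemma {h : E → ℝ} {gh : E → E} (hg : ∀ p, HasGradientAt h (gh p) p)
    {L : ℝ} (hL : 0 < L) (hlip : ∀ p q, ‖gh p - gh q‖ ≤ L * ‖p - q‖) (y u : E) :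
    h u ≤ h y + ⟪gh y, u - y⟫ + L / 2 * ‖u - y‖ ^ 2 := by
  set v := u - y with hv
  set ψ : ℝ → ℝ := fun t => L / 2 * t ^ 2 * ‖v‖ ^ 2 + t * ⟪gh y, v⟫ + h y - h (y + t • v)
    with hψ
  have hder : ∀ t : ℝ, HasDerivAt ψ
      (L * t * ‖v‖ ^ 2 + ⟪gh y, v⟫ - ⟪gh (y + t • v), v⟫) t := by
    intro t
    have hline : HasDerivAt (fun s : ℝ => y + s • v) v t := by
      simpa using ((hasDerivAt_id t).smul_const v).const_add y
    have hcomp : HasDerivAt (fun s : ℝ => h (y + s • v)) ⟪gh (y + t • v), v⟫ t := by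
      have := (hg (y + t • v)).hasFDerivAt.comp_hasDerivAt t hline
      simpa [Function.comp_def] using this
    have h1 : HasDerivAt (fun t : ℝ => L / 2 * t ^ 2 * ‖v‖ ^ 2)
        (L * t * ‖v‖ ^ 2) t := by
      have := ((hasDerivAt_pow 2 t).const_mul (L / 2)).mul_const (‖v‖ ^ 2)
      exact this.congr_deriv (by rw [show (2:ℕ) - 1 = 1 from rfl]; push_cast; ring)
    have h2 : HasDerivAt (fun t : ℝ => t * ⟪gh y, v⟫) ⟪gh y, v⟫ t := by
      simpa using (hasDerivAt_id t).mul_const ⟪gh y, v⟫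
    simpa [hψ, Pi.sub_def] using (((h1.add h2).add_const (h y)).sub hcomp)
  have hmono : MonotoneOn ψ (Set.Icc (0:ℝ) 1) := by
    apply monotoneOn_of_deriv_nonneg (convex_Icc 0 1)
    · exact Continuous.continuousOn (by
        have : Differentiable ℝ ψ := fun t => (hder t).differentiableAt
        exact this.continuous)
    · intro t ht
      exact (hder t).differentiableAt.differentiableWithinAt
    · intro t ht
      rw [(hder t).deriv]
      rw [interior_Icc] at ht
      have hcs : ⟪gh (y + t • v) - gh y, v⟫ ≤ ‖gh (y + t • v) - gh y‖ * ‖v‖ :=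
        real_inner_le_norm _ _
      have hlb : ‖gh (y + t • v) - gh y‖ ≤ L * (t * ‖v‖) := by
        have := hlip (y + t • v) y
        simpa [norm_smul, abs_of_nonneg ht.1.le, mul_assoc] using this
      have hcs2 : ⟪gh (y + t • v) - gh y, v⟫ ≤ L * t * ‖v‖ ^ 2 := by
        calc ⟪gh (y + t • v) - gh y, v⟫ ≤ ‖gh (y + t • v) - gh y‖ * ‖v‖ := hcs
          _ ≤ L * (t * ‖v‖) * ‖v‖ := by
              apply mul_le_mul_of_nonneg_right hlb (norm_nonneg _)
          _ = L * t * ‖v‖ ^ 2 := by ring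
      have hexp : ⟪gh (y + t • v) - gh y, v⟫ = ⟪gh (y + t • v), v⟫ - ⟪gh y, v⟫ := by
        rw [inner_sub_left]
      linarith [hcs2, hexp ▸ hcs2]
  have h01 : ψ 0 ≤ ψ 1 := hmono (by norm_num) (by norm_num) zero_le_one
  have hψ0 : ψ 0 = 0 := by simp [hψ]
  have hψ1 : ψ 1 = L / 2 * ‖v‖ ^ 2 + ⟪gh y, v⟫ + h y - h u := by
    simp only [hψ, one_pow, one_smul, one_mul, mul_one]
    have : y + v = u := by rw [hv]; abel
    rw [this]
  rw [hψ0, hψ1] at h01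
  linarith

-- key cocoercivity-type inequality
lemma key_smooth {h : E → ℝ} {gh : E → E} (hc : ConvexOn ℝ Set.univ h)
    (hg : ∀ p, HasGradientAt h (gh p) p)
    {L : ℝ} (hL : 0 < L) (hlip : ∀ p q, ‖gh p - gh q‖ ≤ L * ‖p - q‖) (y z : E) :
    ‖gh y - gh z‖ ^ 2 ≤ 2 * L * (h y - h z - ⟪gh z, y - z⟫) := by
  set Δ := gh y - gh z with hΔ
  set u := y - L⁻¹ • Δ with hu
  have h1 : h z + ⟪gh z, u - z⟫ ≤ h u := convex_grad_le hc (hg z) u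
  have h2 : h u ≤ h y + ⟪gh y, u - y⟫ + L / 2 * ‖u - y‖ ^ 2 :=
    descent_lemma hg hL hlip y u
  have huy : u - y = -(L⁻¹ • Δ) := by rw [hu]; abel
  have e1 : ⟪gh y, u - y⟫ = -(L⁻¹ * ⟪gh y, Δ⟫) := by
    rw [huy, inner_neg_right, real_inner_smul_right]
  have e2 : ‖u - y‖ ^ 2 = L⁻¹ ^ 2 * ‖Δ‖ ^ 2 := by
    rw [huy, norm_neg, norm_smul]
    simp [abs_of_pos (inv_pos.mpr hL), mul_pow]
  have e3 : ⟪gh z, u - z⟫ = ⟪gh z, y - z⟫ - L⁻¹ * ⟪gh z, Δ⟫ := by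
    have : u - z = (y - z) - L⁻¹ • Δ := by rw [hu]; abel
    rw [this, inner_sub_right, real_inner_smul_right]
  have e4 : ⟪gh y, Δ⟫ - ⟪gh z, Δ⟫ = ‖Δ‖ ^ 2 := by
    rw [← inner_sub_left, ← hΔ, real_inner_self_eq_norm_sq]
  have hLinv : L⁻¹ * L = 1 := inv_mul_cancel₀ hL.ne'
  rw [e3] at h1
  rw [e1, e2] at h2
  have : L⁻¹ * ‖Δ‖ ^ 2 - L / 2 * (L⁻¹ ^ 2 * ‖Δ‖ ^ 2) ≤ h y - h z - ⟪gh z, y - z⟫ := by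
    nlinarith [h1, h2, e4]
  have hsimp : L⁻¹ * ‖Δ‖ ^ 2 - L / 2 * (L⁻¹ ^ 2 * ‖Δ‖ ^ 2) = ‖Δ‖ ^ 2 / (2 * L) := by
    field_simp
    ring
  rw [hsimp] at this
  rw [div_le_iff₀ (by positivity)] at this
  linarith

lemma smul_add_normsq_le (c : ℝ) (u v : E) :
    ‖c • u + c • v‖ ^ 2 ≤ c ^ 2 * (2 * ‖u‖ ^ 2 + 2 * ‖v‖ ^ 2) := by
  rw [← smul_add, norm_smul, mul_pow, Real.norm_eq_abs, sq_abs]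
  apply mul_le_mul_of_nonneg_left _ (sq_nonneg c)
  have h1 := norm_add_le u v
  nlinarith [h1, norm_nonneg u, norm_nonneg v, norm_nonneg (u + v), sq_nonneg (‖u‖ - ‖v‖)]

lemma card_rest {n m : ℕ} (i : Fin n) :
    Fintype.card ({ j : Fin n // j ≠ i } → Fin m) = m ^ (n - 1) := by
  simp [Fintype.card_fun, Fintype.card_subtype_compl]

lemma sum_pi_eval {n m : ℕ} {M : Type*} [AddCommMonoid M] (i : Fin n) (φ : Fin m → M) :
    ∑ l : Fin n → Fin m, φ (l i) = (m ^ (n - 1)) • ∑ j, φ j := by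
  classical
  have := Equiv.sum_comp (Equiv.funSplitAt i (Fin m))
    (fun p : Fin m × ({ j : Fin n // j ≠ i } → Fin m) => φ p.1)
  have hl : ∑ l : Fin n → Fin m, φ (l i)
      = ∑ p : Fin m × ({ j : Fin n // j ≠ i } → Fin m), φ p.1 := by
    rw [← this]; rfl
  rw [hl, Fintype.sum_prod_type]
  simp only [Finset.sum_const, Finset.card_univ, card_rest i]
  rw [← Finset.smul_sum]

lemma sum_pi_cross {n m : ℕ} (i i' : Fin n) (hne : i' ≠ i) (φ ψ : Fin m → E)
    (hφ : ∑ j, φ j = 0) :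
    ∑ l : Fin n → Fin m, ⟪φ (l i), ψ (l i')⟫ = 0 := by
  classical
  have := Equiv.sum_comp (Equiv.funSplitAt i (Fin m))
    (fun p : Fin m × ({ j : Fin n // j ≠ i } → Fin m) => ⟪φ p.1, ψ (p.2 ⟨i', hne⟩)⟫)
  have hl : ∑ l : Fin n → Fin m, ⟪φ (l i), ψ (l i')⟫
      = ∑ p : Fin m × ({ j : Fin n // j ≠ i } → Fin m), ⟪φ p.1, ψ (p.2 ⟨i', hne⟩)⟫ := by
    rw [← this]; rfl
  rw [hl, Fintype.sum_prod_type, Finset.sum_comm]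
  have : ∀ r : { j : Fin n // j ≠ i } → Fin m,
      ∑ a : Fin m, ⟪φ a, ψ (r ⟨i', hne⟩)⟫ = 0 := by
    intro r
    rw [← sum_inner, hφ, inner_zero_left]
  simp [this]

lemma sum_pi_norm_sq {n m : ℕ} (ξ : Fin n → Fin m → E) (hξ : ∀ i, ∑ j, ξ i j = 0) :
    ∑ l : Fin n → Fin m, ‖∑ i, ξ i (l i)‖ ^ 2
      = (m ^ (n - 1)) • ∑ i, ∑ i', ‖ξ i i'‖ ^ 2 := by
  classical
  have hexp : ∀ l : Fin n → Fin m, ‖∑ i, ξ i (l i)‖ ^ 2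
      = ∑ i, ∑ i', ⟪ξ i (l i), ξ i' (l i')⟫ := by
    intro l
    rw [← real_inner_self_eq_norm_sq, sum_inner]
    congr 1; funext i
    rw [inner_sum]
  calc ∑ l : Fin n → Fin m, ‖∑ i, ξ i (l i)‖ ^ 2
      = ∑ l : Fin n → Fin m, ∑ i, ∑ i', ⟪ξ i (l i), ξ i' (l i')⟫ := by
        exact Finset.sum_congr rfl fun l _ => hexp l
    _ = ∑ i, ∑ i', ∑ l : Fin n → Fin m, ⟪ξ i (l i), ξ i' (l i')⟫ := by
        rw [Finset.sum_comm]
        exact Finset.sum_congr rfl fun i _ => Finset.sum_comm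
    _ = ∑ i, ∑ l : Fin n → Fin m, ‖ξ i (l i)‖ ^ 2 := by
        refine Finset.sum_congr rfl fun i _ => ?_
        rw [Finset.sum_eq_single i]
        · refine Finset.sum_congr rfl fun l _ => ?_
          rw [real_inner_self_eq_norm_sq]
        · intro i' _ hne
          exact sum_pi_cross i i' hne (ξ i) (ξ i') (hξ i)
        · intro habs; exact absurd (Finset.mem_univ i) habs
    _ = ∑ i, (m ^ (n - 1)) • ∑ i', ‖ξ i i'‖ ^ 2 := by
        exact Finset.sum_congr rfl fun i _ => sum_pi_eval i (fun j => ‖ξ i j‖ ^ 2)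
    _ = (m ^ (n - 1)) • ∑ i, ∑ i', ‖ξ i i'‖ ^ 2 := by
        rw [Finset.smul_sum]

set_option maxHeartbeats 1000000 in
theorem lsvrg_estimator_unbiased_and_second_moment (d n m : ℕ) (hn : 0 < n) (hm : 0 < m)
    (L : ℝ) (hL : 0 < L)
    (f : Fin n → Fin m → EuclideanSpace ℝ (Fin d) → ℝ)
    (g : Fin n → Fin m → EuclideanSpace ℝ (Fin d) → EuclideanSpace ℝ (Fin d))
    (hconv : ∀ i j, ConvexOn ℝ Set.univ (f i j))
    (hgrad : ∀ i j y, HasGradientAt (f i j) (g i j y) y)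
    (hlip : ∀ i j y z, ‖g i j y - g i j z‖ ≤ L * ‖y - z‖)
    (xstar : EuclideanSpace ℝ (Fin d))
    (hmin : ∀ y, (1 / (n * m) : ℝ) * ∑ i, ∑ j, f i j xstar
        ≤ (1 / (n * m) : ℝ) * ∑ i, ∑ j, f i j y)
    (x : EuclideanSpace ℝ (Fin d)) (w : Fin n → EuclideanSpace ℝ (Fin d))
    (G : (Fin n → Fin m) → EuclideanSpace ℝ (Fin d))
    (hG : ∀ l : Fin n → Fin m,
        G l = (n : ℝ)⁻¹ • ∑ i, (g i (l i) x - g i (l i) (w i)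
                + (m : ℝ)⁻¹ • ∑ j, g i j (w i))) :
    ((Fintype.card (Fin n → Fin m) : ℝ)⁻¹ • ∑ l : Fin n → Fin m, G l
        = (n : ℝ)⁻¹ • ∑ i, (m : ℝ)⁻¹ • ∑ j, g i j x)
    ∧ ((Fintype.card (Fin n → Fin m) : ℝ)⁻¹ * ∑ l : Fin n → Fin m, ‖G l‖ ^ 2
        ≤ 4 * L * ((1 / (n * m) : ℝ) * ∑ i, ∑ j, f i j x
                    - (1 / (n * m) : ℝ) * ∑ i, ∑ j, f i j xstar)
          + 2 * ((1 / (n * m) : ℝ) * ∑ i, ∑ j, ‖g i j (w i) - g i j xstar‖ ^ 2)) := by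
  classical
  have hmR : (0:ℝ) < (m:ℝ) := by exact_mod_cast hm
  have hnR : (0:ℝ) < (n:ℝ) := by exact_mod_cast hn
  have hcard : (Fintype.card (Fin n → Fin m) : ℝ) = (m:ℝ) ^ n := by
    simp [Fintype.card_fun]
  have hmpow : (m:ℝ) ^ n = (m:ℝ) ^ (n - 1) * (m:ℝ) := by
    rw [← pow_succ]
    congr 1
    omega
  -- gradient of the total objective vanishes at xstar
  have hS : ∑ i, ∑ j, g i j xstar = 0 := by
    have hFd : HasFDerivAt (fun y => ∑ i, ∑ j, f i j y)
        (∑ i, ∑ j, (InnerProductSpace.toDual ℝ (EuclideanSpace ℝ (Fin d))) (g i j xstar)) xstar := by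
      apply HasFDerivAt.fun_sum
      intro i _
      apply HasFDerivAt.fun_sum
      intro j _
      exact (hgrad i j xstar).hasFDerivAt
    have hlocmin : IsLocalMin (fun y => ∑ i, ∑ j, f i j y) xstar := by
      apply Filter.Eventually.of_forall
      intro y
      have hpos : (0:ℝ) < 1 / ((n:ℝ) * (m:ℝ)) := by positivity
      exact (mul_le_mul_iff_right₀ hpos).mp (hmin y)
    have h0 := hlocmin.hasFDerivAt_eq_zero hFd
    have h1 : (InnerProductSpace.toDual ℝ (EuclideanSpace ℝ (Fin d))) (∑ i, ∑ j, g i j xstar) = 0 := by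
      rw [map_sum]
      simpa only [map_sum] using h0
    have := (InnerProductSpace.toDual ℝ (EuclideanSpace ℝ (Fin d))).injective
      (by rw [h1, map_zero] : (InnerProductSpace.toDual ℝ (EuclideanSpace ℝ (Fin d))) (∑ i, ∑ j, g i j xstar)
        = (InnerProductSpace.toDual ℝ (EuclideanSpace ℝ (Fin d))) 0)
    exact this
  -- definitions
  set a : Fin n → Fin m → EuclideanSpace ℝ (Fin d) :=
    fun i j => g i j x - g i j xstar with ha
  set b : Fin n → Fin m → EuclideanSpace ℝ (Fin d) :=
    fun i j => g i j (w i) - g i j xstar with hb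
  set bb : Fin n → EuclideanSpace ℝ (Fin d) :=
    fun i => (m:ℝ)⁻¹ • ∑ j, b i j with hbb
  set ξ : Fin n → Fin m → EuclideanSpace ℝ (Fin d) :=
    fun i j => bb i - b i j with hxi
  have hsb : ∀ i, ∑ j, b i j = (m:ℝ) • bb i := by
    intro i
    rw [hbb]
    rw [smul_smul, mul_inv_cancel₀ hmR.ne', one_smul]
  have hxi0 : ∀ i, ∑ j, ξ i j = 0 := by
    intro i
    calc ∑ j, ξ i j = ∑ j : Fin m, (bb i - b i j) := by rw [hxi]
      _ = (m:ℕ) • bb i - ∑ j, b i j := by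
          rw [Finset.sum_sub_distrib, Finset.sum_const, Finset.card_univ, Fintype.card_fin]
      _ = (m:ℝ) • bb i - (m:ℝ) • bb i := by rw [hsb i, Nat.cast_smul_eq_nsmul]
      _ = 0 := sub_self _
  have hkey : ∀ (i : Fin n) (ji : Fin m),
      g i ji x - g i ji (w i) + (m:ℝ)⁻¹ • ∑ j, g i j (w i)
        = a i ji + ξ i ji + (m:ℝ)⁻¹ • ∑ j, g i j xstar := by
    intro i ji
    simp only [ha, hb, hxi, hbb, Finset.sum_sub_distrib, smul_sub]
    abel
  have hGdec : ∀ l : Fin n → Fin m,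
      G l = (n:ℝ)⁻¹ • (∑ i, a i (l i)) + (n:ℝ)⁻¹ • (∑ i, ξ i (l i)) := by
    intro l
    rw [hG l]
    have h1 : ∑ i, (g i (l i) x - g i (l i) (w i) + (m:ℝ)⁻¹ • ∑ j, g i j (w i))
        = ∑ i, (a i (l i) + ξ i (l i)) + (m:ℝ)⁻¹ • ∑ i, ∑ j, g i j xstar := by
      rw [Finset.smul_sum, ← Finset.sum_add_distrib]
      refine Finset.sum_congr rfl fun i _ => ?_
      rw [hkey i (l i)]
    rw [h1, hS, smul_zero, add_zero, Finset.sum_add_distrib, smul_add]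
  constructor
  · -- unbiasedness
    have hsum : ∑ l : Fin n → Fin m, G l
        = (n:ℝ)⁻¹ • ∑ i, (m ^ (n-1)) •
            ∑ j, (g i j x - g i j (w i) + (m:ℝ)⁻¹ • ∑ j', g i j' (w i)) := by
      calc ∑ l : Fin n → Fin m, G l
          = ∑ l : Fin n → Fin m, (n:ℝ)⁻¹ •
              ∑ i, (g i (l i) x - g i (l i) (w i) + (m:ℝ)⁻¹ • ∑ j, g i j (w i)) :=
            Finset.sum_congr rfl fun l _ => hG l
        _ = (n:ℝ)⁻¹ • ∑ l : Fin n → Fin m,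
              ∑ i, (g i (l i) x - g i (l i) (w i) + (m:ℝ)⁻¹ • ∑ j, g i j (w i)) := by
            rw [Finset.smul_sum]
        _ = (n:ℝ)⁻¹ • ∑ i, ∑ l : Fin n → Fin m,
              (g i (l i) x - g i (l i) (w i) + (m:ℝ)⁻¹ • ∑ j, g i j (w i)) := by
            rw [Finset.sum_comm]
        _ = (n:ℝ)⁻¹ • ∑ i, (m ^ (n-1)) •
              ∑ j, (g i j x - g i j (w i) + (m:ℝ)⁻¹ • ∑ j', g i j' (w i)) := by
            congr 1
            exact Finset.sum_congr rfl fun i _ =>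
              sum_pi_eval i (fun j => g i j x - g i j (w i) + (m:ℝ)⁻¹ • ∑ j', g i j' (w i))
    have hinner : ∀ i : Fin n,
        ∑ j, (g i j x - g i j (w i) + (m:ℝ)⁻¹ • ∑ j', g i j' (w i)) = ∑ j, g i j x := by
      intro i
      rw [Finset.sum_add_distrib, Finset.sum_sub_distrib, Finset.sum_const,
        Finset.card_univ, Fintype.card_fin, ← Nat.cast_smul_eq_nsmul ℝ,
        smul_smul, mul_inv_cancel₀ hmR.ne', one_smul]
      abel
    rw [hsum, hcard]
    simp only [hinner]
    rw [smul_comm]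
    congr 1
    rw [Finset.smul_sum]
    refine Finset.sum_congr rfl fun i _ => ?_
    rw [← Nat.cast_smul_eq_nsmul ℝ, smul_smul]
    congr 1
    push_cast
    rw [hmpow]
    field_simp
  · -- second moment
    have hterm : ∀ i j, ‖a i j‖^2
        ≤ 2*L*(f i j x - f i j xstar - ⟪g i j xstar, x - xstar⟫) := by
      intro i j
      simpa [ha] using key_smooth (hconv i j) (hgrad i j) hL (hlip i j) x xstar
    have hPA : ∑ i, ∑ j, ‖a i j‖^2
        ≤ 2*L*((∑ i, ∑ j, f i j x) - ∑ i, ∑ j, f i j xstar) := by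
      calc ∑ i, ∑ j, ‖a i j‖^2
          ≤ ∑ i, ∑ j, 2*L*(f i j x - f i j xstar - ⟪g i j xstar, x - xstar⟫) :=
            Finset.sum_le_sum fun i _ => Finset.sum_le_sum fun j _ => hterm i j
        _ = 2*L*((∑ i, ∑ j, f i j x) - (∑ i, ∑ j, f i j xstar)
              - ∑ i, ∑ j, ⟪g i j xstar, x - xstar⟫) := by
            simp only [mul_sub, Finset.mul_sum, Finset.sum_sub_distrib]
        _ = 2*L*((∑ i, ∑ j, f i j x) - ∑ i, ∑ j, f i j xstar) := by
            have h0 : ∑ i, ∑ j, ⟪g i j xstar, x - xstar⟫ = 0 := by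
              have : ∀ i : Fin n, ∑ j, ⟪g i j xstar, x - xstar⟫
                  = ⟪∑ j, g i j xstar, x - xstar⟫ := fun i => (sum_inner _ _ _).symm
              simp only [this, ← sum_inner, hS, inner_zero_left]
            rw [h0, sub_zero]
    have hQR : ∑ i, ∑ j, ‖ξ i j‖^2 ≤ ∑ i, ∑ j, ‖b i j‖^2 := by
      refine Finset.sum_le_sum fun i _ => ?_
      have e1 : ∀ j, ‖ξ i j‖^2 = ‖bb i‖^2 - 2*⟪bb i, b i j⟫ + ‖b i j‖^2 := by
        intro j
        simp only [hxi]
        exact norm_sub_sq_real _ _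
      have hexp : ∑ j, ‖ξ i j‖^2 = ∑ j, ‖b i j‖^2 - (m:ℝ) * ‖bb i‖^2 := by
        calc ∑ j, ‖ξ i j‖^2
            = ∑ j, (‖bb i‖^2 - 2*⟪bb i, b i j⟫ + ‖b i j‖^2) :=
              Finset.sum_congr rfl fun j _ => e1 j
          _ = (m:ℝ)*‖bb i‖^2 - 2*⟪bb i, ∑ j, b i j⟫ + ∑ j, ‖b i j‖^2 := by
              rw [Finset.sum_add_distrib, Finset.sum_sub_distrib, Finset.sum_const,
                Finset.card_univ, Fintype.card_fin, ← Finset.mul_sum, ← inner_sum,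
                nsmul_eq_mul]
          _ = ∑ j, ‖b i j‖^2 - (m:ℝ) * ‖bb i‖^2 := by
              rw [hsb i, real_inner_smul_right, real_inner_self_eq_norm_sq]
              ring
      rw [hexp]
      have := mul_nonneg hmR.le (sq_nonneg ‖bb i‖)
      linarith
    have hXsum : ∑ l : Fin n → Fin m, ‖∑ i, ξ i (l i)‖^2
        = (m:ℝ)^(n-1) * ∑ i, ∑ j, ‖ξ i j‖^2 := by
      rw [sum_pi_norm_sq ξ hxi0, ← Nat.cast_smul_eq_nsmul ℝ]
      push_cast
      rw [smul_eq_mul]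
    have hAl : ∀ l : Fin n → Fin m,
        ‖∑ i, a i (l i)‖^2 ≤ (n:ℝ) * ∑ i, ‖a i (l i)‖^2 := by
      intro l
      have h1 : ‖∑ i, a i (l i)‖ ≤ ∑ i, ‖a i (l i)‖ := norm_sum_le _ _
      calc ‖∑ i, a i (l i)‖^2 ≤ (∑ i, ‖a i (l i)‖)^2 := by
            apply pow_le_pow_left₀ (norm_nonneg _) h1
        _ ≤ (n:ℝ) * ∑ i, ‖a i (l i)‖^2 := by
            simpa using sq_sum_le_card_mul_sum_sq
              (s := (Finset.univ : Finset (Fin n))) (f := fun i => ‖a i (l i)‖)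
    have hAsum : ∑ l : Fin n → Fin m, ‖∑ i, a i (l i)‖^2
        ≤ (n:ℝ) * ((m:ℝ)^(n-1) * ∑ i, ∑ j, ‖a i j‖^2) := by
      calc ∑ l : Fin n → Fin m, ‖∑ i, a i (l i)‖^2
          ≤ ∑ l : Fin n → Fin m, (n:ℝ) * ∑ i, ‖a i (l i)‖^2 :=
            Finset.sum_le_sum fun l _ => hAl l
        _ = (n:ℝ) * ∑ l : Fin n → Fin m, ∑ i, ‖a i (l i)‖^2 := by
            rw [← Finset.mul_sum]
        _ = (n:ℝ) * ((m:ℝ)^(n-1) * ∑ i, ∑ j, ‖a i j‖^2) := by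
            congr 1
            rw [Finset.sum_comm]
            calc ∑ i, ∑ l : Fin n → Fin m, ‖a i (l i)‖^2
                = ∑ i, (m^(n-1)) • ∑ j, ‖a i j‖^2 :=
                  Finset.sum_congr rfl fun i _ => sum_pi_eval (m := m) i (fun j => ‖a i j‖ ^ 2)
              _ = (m:ℝ)^(n-1) * ∑ i, ∑ j, ‖a i j‖^2 := by
                  rw [← Finset.smul_sum, ← Nat.cast_smul_eq_nsmul ℝ]
                  push_cast
                  rw [smul_eq_mul]
    have hGl : ∀ l : Fin n → Fin m, ‖G l‖^2
        ≤ (n:ℝ)⁻¹^2 * (2*‖∑ i, a i (l i)‖^2 + 2*‖∑ i, ξ i (l i)‖^2) := by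
      intro l
      rw [hGdec l]
      exact smul_add_normsq_le _ _ _
    have hchain : ∑ l : Fin n → Fin m, ‖G l‖^2
        ≤ (n:ℝ)⁻¹^2 * (2*((n:ℝ)*((m:ℝ)^(n-1) * ∑ i, ∑ j, ‖a i j‖^2))
            + 2*((m:ℝ)^(n-1) * ∑ i, ∑ j, ‖ξ i j‖^2)) := by
      calc ∑ l : Fin n → Fin m, ‖G l‖^2
          ≤ ∑ l : Fin n → Fin m, (n:ℝ)⁻¹^2 *
              (2*‖∑ i, a i (l i)‖^2 + 2*‖∑ i, ξ i (l i)‖^2) :=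
            Finset.sum_le_sum fun l _ => hGl l
        _ = (n:ℝ)⁻¹^2 * (2*∑ l : Fin n → Fin m, ‖∑ i, a i (l i)‖^2
              + 2*∑ l : Fin n → Fin m, ‖∑ i, ξ i (l i)‖^2) := by
            rw [← Finset.mul_sum]
            congr 1
            rw [Finset.sum_add_distrib, ← Finset.mul_sum, ← Finset.mul_sum]
        _ ≤ _ := by
            apply mul_le_mul_of_nonneg_left _ (by positivity)
            rw [hXsum]
            linarith [hAsum]
    rw [hcard]
    have hgoalb : (∑ i, ∑ j, ‖g i j (w i) - g i j xstar‖ ^ 2)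
        = ∑ i, ∑ j, ‖b i j‖^2 := by simp only [hb]
    rw [hgoalb]
    calc ((m:ℝ)^n)⁻¹ * ∑ l : Fin n → Fin m, ‖G l‖^2
        ≤ ((m:ℝ)^n)⁻¹ * ((n:ℝ)⁻¹^2 *
            (2*((n:ℝ)*((m:ℝ)^(n-1) * ∑ i, ∑ j, ‖a i j‖^2))
              + 2*((m:ℝ)^(n-1) * ∑ i, ∑ j, ‖ξ i j‖^2))) :=
          mul_le_mul_of_nonneg_left hchain (by positivity)
      _ = 2*(1/((n:ℝ)*(m:ℝ)))*(∑ i, ∑ j, ‖a i j‖^2)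
          + 2*(1/((n:ℝ)*(m:ℝ)))*((n:ℝ)⁻¹ * ∑ i, ∑ j, ‖ξ i j‖^2) := by
          rw [hmpow]
          field_simp
      _ ≤ 4 * L * (1/((n:ℝ)*(m:ℝ)) * (∑ i, ∑ j, f i j x)
            - 1/((n:ℝ)*(m:ℝ)) * ∑ i, ∑ j, f i j xstar)
          + 2 * (1/((n:ℝ)*(m:ℝ)) * ∑ i, ∑ j, ‖b i j‖^2) := by
          have hQ0 : (0:ℝ) ≤ ∑ i, ∑ j, ‖ξ i j‖^2 :=
            Finset.sum_nonneg fun i _ => Finset.sum_nonneg fun j _ => sq_nonneg _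
          have hc0 : (0:ℝ) ≤ 1/((n:ℝ)*(m:ℝ)) := by positivity
          have hninv : (n:ℝ)⁻¹ ≤ 1 := by
            have h1n : (1:ℝ) ≤ (n:ℝ) := by exact_mod_cast hn
            rw [inv_le_one₀ hnR]
            exact h1n
          have t2 : (n:ℝ)⁻¹ * (∑ i, ∑ j, ‖ξ i j‖^2) ≤ ∑ i, ∑ j, ‖b i j‖^2 := by
            calc (n:ℝ)⁻¹ * (∑ i, ∑ j, ‖ξ i j‖^2) ≤ 1 * (∑ i, ∑ j, ‖ξ i j‖^2) :=
                mul_le_mul_of_nonneg_right hninv hQ0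
              _ = ∑ i, ∑ j, ‖ξ i j‖^2 := one_mul _
              _ ≤ ∑ i, ∑ j, ‖b i j‖^2 := hQR
          have t1 : 2*(1/((n:ℝ)*(m:ℝ)))*(∑ i, ∑ j, ‖a i j‖^2)
              ≤ 2*(1/((n:ℝ)*(m:ℝ)))*(2*L*((∑ i, ∑ j, f i j x) - ∑ i, ∑ j, f i j xstar)) :=
            mul_le_mul_of_nonneg_left hPA (by positivity)
          have t2' : 2*(1/((n:ℝ)*(m:ℝ)))*((n:ℝ)⁻¹ * ∑ i, ∑ j, ‖ξ i j‖^2)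
              ≤ 2*(1/((n:ℝ)*(m:ℝ)))*(∑ i, ∑ j, ‖b i j‖^2) :=
            mul_le_mul_of_nonneg_left t2 (by positivity)
          have hr : 4 * L * (1/((n:ℝ)*(m:ℝ)) * (∑ i, ∑ j, f i j x)
                - 1/((n:ℝ)*(m:ℝ)) * ∑ i, ∑ j, f i j xstar)
              = 2*(1/((n:ℝ)*(m:ℝ)))*(2*L*((∑ i, ∑ j, f i j x) - ∑ i, ∑ j, f i j xstar)) := by
            ring
          rw [hr]
          linarith
end

section
/- Let C : R^d → R^d be a (possibly random) δ-contractive compressor, i.e., E‖C(x) − x‖² ≤ (1 − δ)‖x‖² for all x, with 0 < δ ≤ 1. For the error-feedback recursion e⁺ = e + γg − C(e + γg), where g = ḡ + ζ with Eζ = 0 (conditionally), one has E‖e⁺‖² ≤ (1 − δ/2)E‖e‖² + (2γ²(1−δ)/δ)E‖ḡ‖² + (1−δ)γ²E‖ζ‖². -/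
open MeasureTheory
open scoped RealInnerProductSpace

lemma young_aux {δ E B t : ℝ} (hδ0 : 0 < δ) (hδ1 : δ ≤ 1)
    (hE : 0 ≤ E) (hB : 0 ≤ B) (ht : t ≤ E * B) :
    (1 - δ) * (E ^ 2 + 2 * t + B ^ 2) ≤ (1 - δ / 2) * E ^ 2 + (2 * (1 - δ) / δ) * B ^ 2 := by
  have hδ' : (0:ℝ) ≤ 1 - δ := by linarith
  set c : ℝ := (1 - δ) / δ with hc_def
  have hc : δ * c = 1 - δ := by rw [hc_def]; field_simp [hδ0.ne']
  have hcoef : (2 * (1 - δ) / δ) * B ^ 2 = 2 * c * B ^ 2 := by rw [hc_def]; ring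
  rw [hcoef]
  have h1 : 0 ≤ δ * (1 - δ) * (E * B - t) :=
    mul_nonneg (mul_nonneg hδ0.le hδ') (by linarith)
  have h2 : 0 ≤ (δ * E - 2 * (1 - δ) * B) ^ 2 := sq_nonneg _
  have h3 : δ * (2 * c * B ^ 2) = 2 * (1 - δ) * B ^ 2 := by
    rw [show δ * (2 * c * B ^ 2) = 2 * B ^ 2 * (δ * c) by ring, hc]; ring
  have h4 : 0 ≤ (1 - δ) * δ * B ^ 2 := mul_nonneg (mul_nonneg hδ' hδ0.le) (sq_nonneg B)
  nlinarith [h1, h2, h3, h4, hδ0]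

theorem error_feedback_contraction {Ω₁ Ω₂ : Type*}
    [MeasurableSpace Ω₁] [MeasurableSpace Ω₂]
    (μ₁ : Measure Ω₁) (μ₂ : Measure Ω₂)
    [IsProbabilityMeasure μ₁] [IsProbabilityMeasure μ₂]
    (d : ℕ) (δ γ : ℝ) (hδ0 : 0 < δ) (hδ1 : δ ≤ 1) (hγ : 0 < γ)
    (e gbar ζ : Ω₁ → EuclideanSpace ℝ (Fin d))
    (C : EuclideanSpace ℝ (Fin d) → Ω₂ → EuclideanSpace ℝ (Fin d))
    (heL2 : MemLp e 2 μ₁) (hgbarL2 : MemLp gbar 2 μ₁) (hζL2 : MemLp ζ 2 μ₁)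
    (hCmeas : Measurable fun q : EuclideanSpace ℝ (Fin d) × Ω₂ => C q.1 q.2)
    (hζmean : ∫ w, ζ w ∂μ₁ = 0)
    (horth : ∫ w, ⟪e w + γ • gbar w, ζ w⟫ ∂μ₁ = 0)
    (hC : ∀ v, ∫ w, ‖C v w - v‖ ^ 2 ∂μ₂ ≤ (1 - δ) * ‖v‖ ^ 2) :
    ∫ q, ‖(e q.1 + γ • (gbar q.1 + ζ q.1))
            - C (e q.1 + γ • (gbar q.1 + ζ q.1)) q.2‖ ^ 2 ∂(μ₁.prod μ₂)
      ≤ (1 - δ / 2) * ∫ w, ‖e w‖ ^ 2 ∂μ₁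
        + (2 * γ ^ 2 * (1 - δ) / δ) * ∫ w, ‖gbar w‖ ^ 2 ∂μ₁
        + (1 - δ) * γ ^ 2 * ∫ w, ‖ζ w‖ ^ 2 ∂μ₁ := by
  have hδ' : (0:ℝ) ≤ 1 - δ := by linarith
  have hA : (0:ℝ) ≤ ∫ w, ‖e w‖ ^ 2 ∂μ₁ := integral_nonneg fun w => by positivity
  have hB : (0:ℝ) ≤ ∫ w, ‖gbar w‖ ^ 2 ∂μ₁ := integral_nonneg fun w => by positivity
  have hZ : (0:ℝ) ≤ ∫ w, ‖ζ w‖ ^ 2 ∂μ₁ := integral_nonneg fun w => by positivity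
  have hRHSpos : (0:ℝ) ≤ (1 - δ / 2) * ∫ w, ‖e w‖ ^ 2 ∂μ₁
        + (2 * γ ^ 2 * (1 - δ) / δ) * ∫ w, ‖gbar w‖ ^ 2 ∂μ₁
        + (1 - δ) * γ ^ 2 * ∫ w, ‖ζ w‖ ^ 2 ∂μ₁ := by
    have h1 : (0:ℝ) ≤ 1 - δ / 2 := by linarith
    have h2 : (0:ℝ) ≤ 2 * γ ^ 2 * (1 - δ) / δ := by positivity
    have h3 : (0:ℝ) ≤ (1 - δ) * γ ^ 2 := by positivity
    have := mul_nonneg h1 hA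
    have := mul_nonneg h2 hB
    have := mul_nonneg h3 hZ
    linarith
  by_cases hInt : Integrable (fun q : Ω₁ × Ω₂ =>
      ‖(e q.1 + γ • (gbar q.1 + ζ q.1))
            - C (e q.1 + γ • (gbar q.1 + ζ q.1)) q.2‖ ^ 2) (μ₁.prod μ₂)
  swap
  · rw [integral_undef hInt]; exact hRHSpos
  set a : Ω₁ → EuclideanSpace ℝ (Fin d) := fun w => e w + γ • gbar w with ha
  set v : Ω₁ → EuclideanSpace ℝ (Fin d) := fun w => e w + γ • (gbar w + ζ w) with hv
  have hC' : ∀ u : EuclideanSpace ℝ (Fin d),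
      ∫ x, ‖u - C u x‖ ^ 2 ∂μ₂ ≤ (1 - δ) * ‖u‖ ^ 2 := by
    intro u
    have := hC u
    simpa only [norm_sub_rev] using this
  have hvexp : ∀ w, v w = a w + γ • ζ w := by
    intro w; simp only [hv, ha, smul_add]; abel
  have haL2 : MemLp a 2 μ₁ := heL2.add (hgbarL2.const_smul γ)
  have hvL2 : MemLp v 2 μ₁ := heL2.add ((hgbarL2.add hζL2).const_smul γ)
  have hIa : Integrable (fun w => ‖a w‖ ^ 2) μ₁ := haL2.norm.integrable_sq
  have hIv : Integrable (fun w => ‖v w‖ ^ 2) μ₁ := hvL2.norm.integrable_sq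
  have hIz : Integrable (fun w => ‖ζ w‖ ^ 2) μ₁ := hζL2.norm.integrable_sq
  have hIe : Integrable (fun w => ‖e w‖ ^ 2) μ₁ := heL2.norm.integrable_sq
  have hIg : Integrable (fun w => ‖gbar w‖ ^ 2) μ₁ := hgbarL2.norm.integrable_sq
  have hIcr : Integrable (fun w => ⟪a w, ζ w⟫) μ₁ := by
    have h1 : Integrable (fun w => ⟪(haL2.toLp a) w, (hζL2.toLp ζ) w⟫) μ₁ :=
      L2.integrable_inner (𝕜 := ℝ) _ _
    apply h1.congr
    filter_upwards [haL2.coeFn_toLp, hζL2.coeFn_toLp] with w h h'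
    rw [h, h']
  rw [MeasureTheory.integral_prod _ hInt]
  show ∫ w, (∫ x, ‖v w - C (v w) x‖ ^ 2 ∂μ₂) ∂μ₁ ≤ _
  have hIleft : Integrable (fun w => ∫ x, ‖v w - C (v w) x‖ ^ 2 ∂μ₂) μ₁ :=
    hInt.integral_prod_left
  have step1 : ∫ w, (∫ x, ‖v w - C (v w) x‖ ^ 2 ∂μ₂) ∂μ₁
      ≤ ∫ w, (1 - δ) * ‖v w‖ ^ 2 ∂μ₁ :=
    integral_mono hIleft (hIv.const_mul _) (fun w => hC' (v w))
  have step1' : ∫ w, (1 - δ) * ‖v w‖ ^ 2 ∂μ₁ = (1 - δ) * ∫ w, ‖v w‖ ^ 2 ∂μ₁ :=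
    integral_const_mul _ _
  have step2 : ∫ w, ‖v w‖ ^ 2 ∂μ₁
      = (∫ w, ‖a w‖ ^ 2 ∂μ₁) + γ ^ 2 * ∫ w, ‖ζ w‖ ^ 2 ∂μ₁ := by
    have hpt : ∀ w, ‖v w‖ ^ 2
        = ‖a w‖ ^ 2 + (2 * γ) * ⟪a w, ζ w⟫ + γ ^ 2 * ‖ζ w‖ ^ 2 := by
      intro w
      rw [hvexp w, norm_add_sq_real, real_inner_smul_right, norm_smul,
        Real.norm_eq_abs, abs_of_pos hγ]
      ring
    calc ∫ w, ‖v w‖ ^ 2 ∂μ₁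
        = ∫ w, (‖a w‖ ^ 2 + (2 * γ) * ⟪a w, ζ w⟫ + γ ^ 2 * ‖ζ w‖ ^ 2) ∂μ₁ :=
          integral_congr_ae (Filter.Eventually.of_forall hpt)
      _ = (∫ w, ‖a w‖ ^ 2 ∂μ₁) + (2 * γ) * (∫ w, ⟪a w, ζ w⟫ ∂μ₁)
            + γ ^ 2 * ∫ w, ‖ζ w‖ ^ 2 ∂μ₁ := by
          have hI12 : Integrable (fun w => ‖a w‖ ^ 2 + 2 * γ * ⟪a w, ζ w⟫) μ₁ :=
            hIa.add (hIcr.const_mul (2 * γ))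
          have e1 : ∫ w, ((‖a w‖ ^ 2 + 2 * γ * ⟪a w, ζ w⟫) + γ ^ 2 * ‖ζ w‖ ^ 2) ∂μ₁
              = (∫ w, (‖a w‖ ^ 2 + 2 * γ * ⟪a w, ζ w⟫) ∂μ₁)
                + ∫ w, γ ^ 2 * ‖ζ w‖ ^ 2 ∂μ₁ :=
            integral_add hI12 (hIz.const_mul (γ ^ 2))
          have e2 : ∫ w, (‖a w‖ ^ 2 + 2 * γ * ⟪a w, ζ w⟫) ∂μ₁
              = (∫ w, ‖a w‖ ^ 2 ∂μ₁) + ∫ w, 2 * γ * ⟪a w, ζ w⟫ ∂μ₁ :=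
            integral_add hIa (hIcr.const_mul (2 * γ))
          rw [e1, e2, integral_const_mul, integral_const_mul]
      _ = (∫ w, ‖a w‖ ^ 2 ∂μ₁) + γ ^ 2 * ∫ w, ‖ζ w‖ ^ 2 ∂μ₁ := by
          rw [horth]; ring
  have step3 : (1 - δ) * ∫ w, ‖a w‖ ^ 2 ∂μ₁
      ≤ (1 - δ / 2) * (∫ w, ‖e w‖ ^ 2 ∂μ₁)
        + (2 * γ ^ 2 * (1 - δ) / δ) * ∫ w, ‖gbar w‖ ^ 2 ∂μ₁ := by
    have hptw : ∀ w, (1 - δ) * ‖a w‖ ^ 2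
        ≤ (1 - δ / 2) * ‖e w‖ ^ 2 + (2 * γ ^ 2 * (1 - δ) / δ) * ‖gbar w‖ ^ 2 := by
      intro w
      have hexp : ‖a w‖ ^ 2 = ‖e w‖ ^ 2 + 2 * ⟪e w, γ • gbar w⟫ + ‖γ • gbar w‖ ^ 2 :=
        norm_add_sq_real _ _
      have hip : ⟪e w, γ • gbar w⟫ ≤ ‖e w‖ * ‖γ • gbar w‖ := real_inner_le_norm _ _
      have hy := young_aux (E := ‖e w‖) (B := ‖γ • gbar w‖) (t := ⟪e w, γ • gbar w⟫)
        hδ0 hδ1 (norm_nonneg _) (norm_nonneg _) hip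
      have hsmul : ‖γ • gbar w‖ ^ 2 = γ ^ 2 * ‖gbar w‖ ^ 2 := by
        rw [norm_smul, Real.norm_eq_abs, abs_of_pos hγ, mul_pow]
      have hcoef : (2 * (1 - δ) / δ) * ‖γ • gbar w‖ ^ 2
          = (2 * γ ^ 2 * (1 - δ) / δ) * ‖gbar w‖ ^ 2 := by
        rw [hsmul]; ring
      rw [hexp]
      calc (1 - δ) * (‖e w‖ ^ 2 + 2 * ⟪e w, γ • gbar w⟫ + ‖γ • gbar w‖ ^ 2)
          ≤ (1 - δ / 2) * ‖e w‖ ^ 2 + (2 * (1 - δ) / δ) * ‖γ • gbar w‖ ^ 2 := hy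
        _ = (1 - δ / 2) * ‖e w‖ ^ 2 + (2 * γ ^ 2 * (1 - δ) / δ) * ‖gbar w‖ ^ 2 := by
            rw [hcoef]
    calc (1 - δ) * ∫ w, ‖a w‖ ^ 2 ∂μ₁
        = ∫ w, (1 - δ) * ‖a w‖ ^ 2 ∂μ₁ := (integral_const_mul _ _).symm
      _ ≤ ∫ w, ((1 - δ / 2) * ‖e w‖ ^ 2 + (2 * γ ^ 2 * (1 - δ) / δ) * ‖gbar w‖ ^ 2) ∂μ₁ :=
          integral_mono (hIa.const_mul _)
            ((hIe.const_mul ((1:ℝ) - δ / 2)).add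
              (hIg.const_mul (2 * γ ^ 2 * (1 - δ) / δ))) hptw
      _ = (1 - δ / 2) * (∫ w, ‖e w‖ ^ 2 ∂μ₁)
            + (2 * γ ^ 2 * (1 - δ) / δ) * ∫ w, ‖gbar w‖ ^ 2 ∂μ₁ := by
          rw [integral_add (hIe.const_mul ((1:ℝ) - δ / 2))
            (hIg.const_mul (2 * γ ^ 2 * (1 - δ) / δ)), integral_const_mul, integral_const_mul]
  have final : (1 - δ) * ∫ w, ‖v w‖ ^ 2 ∂μ₁
      ≤ (1 - δ / 2) * ∫ w, ‖e w‖ ^ 2 ∂μ₁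
        + (2 * γ ^ 2 * (1 - δ) / δ) * ∫ w, ‖gbar w‖ ^ 2 ∂μ₁
        + (1 - δ) * γ ^ 2 * ∫ w, ‖ζ w‖ ^ 2 ∂μ₁ := by
    rw [step2]
    nlinarith [step3, mul_nonneg (mul_nonneg hδ' (sq_nonneg γ)) hZ]
  calc ∫ w, (∫ x, ‖v w - C (v w) x‖ ^ 2 ∂μ₂) ∂μ₁
      ≤ (1 - δ) * ∫ w, ‖v w‖ ^ 2 ∂μ₁ := step1'.symm ▸ step1
    _ ≤ _ := final
end

section
/- Let f be L-smooth and μ-strongly quasi-convex with unique minimizer x*, and suppose at iteration k the stochastic gradient g^k is conditionally unbiased (E[g^k | x^k] = ∇f(x^k)) with E[‖g^k‖² | x^k] ≤ 2A′(f(x^k) − f(x*)) + D′₁. Consider the perturbed iterate x̃^{k+1} = x̃^k − γ g^k where x̃^k = x^k − e^k. If γ ≤ 1/(4A′), then E[‖x̃^{k+1} − x*‖² | x^k] ≤ (1 − γμ/2)‖x̃^k − x*‖² − (γ/2)(f(x^k) − f(x*)) + γ²D′₁ + γ(2L + μ)‖e^k‖². -/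
open MeasureTheory
open scoped RealInnerProductSpace

section Aux

variable {d : ℕ}

lemma line_hasDerivAt (f : EuclideanSpace ℝ (Fin d) → ℝ)
    (f' : EuclideanSpace ℝ (Fin d) → EuclideanSpace ℝ (Fin d))
    (hgrad : ∀ y, HasGradientAt f (f' y) y)
    (y v : EuclideanSpace ℝ (Fin d)) (t : ℝ) :
    HasDerivAt (fun s : ℝ => f (y + s • v)) ⟪f' (y + t • v), v⟫ t := by
  have hline : HasDerivAt (fun s : ℝ => y + s • v) v t := by
    simpa using ((hasDerivAt_id t).smul_const v).const_add y
  have hF := (hgrad (y + t • v)).hasFDerivAt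
  have := hF.comp_hasDerivAt t hline
  simpa [InnerProductSpace.toDual_apply_apply, Function.comp_def] using this

lemma descent_lemma_s19 (L : ℝ) (hL : 0 < L)
    (f : EuclideanSpace ℝ (Fin d) → ℝ)
    (f' : EuclideanSpace ℝ (Fin d) → EuclideanSpace ℝ (Fin d))
    (hgrad : ∀ y, HasGradientAt f (f' y) y)
    (hlip : ∀ y z, ‖f' y - f' z‖ ≤ L * ‖y - z‖)
    (y z : EuclideanSpace ℝ (Fin d)) :
    f z ≤ f y + ⟪f' y, z - y⟫ + L / 2 * ‖z - y‖ ^ 2 := by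
  set v := z - y with hv
  set ψ : ℝ → ℝ := fun t => f (y + t • v) - t * ⟪f' y, v⟫ - L * t ^ 2 / 2 * ‖v‖ ^ 2 with hψ
  have hder : ∀ t : ℝ, HasDerivAt ψ
      (⟪f' (y + t • v), v⟫ - ⟪f' y, v⟫ - L * t * ‖v‖ ^ 2) t := by
    intro t
    have h1 := line_hasDerivAt f f' hgrad y v t
    have h2 : HasDerivAt (fun s : ℝ => s * ⟪f' y, v⟫) ⟪f' y, v⟫ t := by
      simpa using (hasDerivAt_id t).mul_const ⟪f' y, v⟫
    have h3 : HasDerivAt (fun s : ℝ => L * s ^ 2 / 2 * ‖v‖ ^ 2) (L * t * ‖v‖ ^ 2) t := by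
      have : HasDerivAt (fun s : ℝ => s ^ 2) (2 * t) t := by
        simpa using hasDerivAt_pow 2 t
      have := ((this.const_mul L).div_const 2).mul_const (‖v‖ ^ 2)
      refine this.congr_deriv ?_
      ring
    exact (h1.sub h2).sub h3
  have hderiv_nonpos : ∀ t ∈ interior (Set.Icc (0:ℝ) 1), deriv ψ t ≤ 0 := by
    intro t ht
    rw [interior_Icc] at ht
    rw [(hder t).deriv]
    have hlip' : ⟪f' (y + t • v) - f' y, v⟫ ≤ L * t * ‖v‖ ^ 2 := by
      calc ⟪f' (y + t • v) - f' y, v⟫ ≤ ‖f' (y + t • v) - f' y‖ * ‖v‖ :=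
            real_inner_le_norm _ _
        _ ≤ (L * ‖(y + t • v) - y‖) * ‖v‖ := by
            gcongr; exact hlip _ _
        _ = L * t * ‖v‖ ^ 2 := by
            rw [add_sub_cancel_left, norm_smul, Real.norm_eq_abs, abs_of_pos ht.1]
            ring
    have : ⟪f' (y + t • v), v⟫ - ⟪f' y, v⟫ = ⟪f' (y + t • v) - f' y, v⟫ := by
      rw [inner_sub_left]
    linarith [this ▸ hlip']
  have hanti : AntitoneOn ψ (Set.Icc (0:ℝ) 1) := by
    apply antitoneOn_of_deriv_nonpos (convex_Icc 0 1)
    · exact Continuous.continuousOn (by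
        have : Differentiable ℝ ψ := fun t => (hder t).differentiableAt
        exact this.continuous)
    · exact fun t _ => ((hder t).differentiableAt).differentiableWithinAt
    · exact hderiv_nonpos
  have h01 := hanti (Set.left_mem_Icc.2 zero_le_one) (Set.right_mem_Icc.2 zero_le_one)
    zero_le_one
  have h0 : ψ 0 = f y := by simp [hψ]
  have h1 : ψ 1 = f z - ⟪f' y, v⟫ - L / 2 * ‖v‖ ^ 2 := by
    have hz : y + (1:ℝ) • v = z := by rw [one_smul, hv]; abel
    rw [hψ]
    simp only [hz, one_pow, one_mul]
    ring
  rw [h0, h1] at h01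
  linarith

end Aux

set_option maxHeartbeats 1000000 in
theorem ec_sgd_descent_step {Ω : Type*} [MeasurableSpace Ω]
    (μ : Measure Ω) [IsProbabilityMeasure μ]
    (d : ℕ) (L m γ A' D₁' : ℝ)
    (hL : 0 < L) (hm0 : 0 ≤ m) (hmL : m ≤ L) (hA' : 0 < A') (hD : 0 ≤ D₁')
    (hγ0 : 0 < γ) (hγ : γ ≤ 1 / (4 * A'))
    (f : EuclideanSpace ℝ (Fin d) → ℝ)
    (f' : EuclideanSpace ℝ (Fin d) → EuclideanSpace ℝ (Fin d))
    (hgrad : ∀ y, HasGradientAt f (f' y) y)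
    (hlip : ∀ y z, ‖f' y - f' z‖ ≤ L * ‖y - z‖)
    (xstar : EuclideanSpace ℝ (Fin d))
    (hmin : ∀ y, f xstar ≤ f y)
    (hqsc : ∀ y, f y + ⟪f' y, xstar - y⟫ + m / 2 * ‖y - xstar‖ ^ 2 ≤ f xstar)
    (x e : EuclideanSpace ℝ (Fin d)) (g : Ω → EuclideanSpace ℝ (Fin d))
    (hgL2 : MemLp g 2 μ)
    (hunb : ∫ w, g w ∂μ = f' x)
    (hsec : ∫ w, ‖g w‖ ^ 2 ∂μ ≤ 2 * A' * (f x - f xstar) + D₁') :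
    ∫ w, ‖(x - e - γ • g w) - xstar‖ ^ 2 ∂μ ≤
      (1 - γ * m / 2) * ‖(x - e) - xstar‖ ^ 2 - γ / 2 * (f x - f xstar)
        + γ ^ 2 * D₁' + γ * (2 * L + m) * ‖e‖ ^ 2 := by
  set c : EuclideanSpace ℝ (Fin d) := x - e - xstar with hc
  set F : ℝ := f x - f xstar with hFdef
  have hF : 0 ≤ F := sub_nonneg.2 (hmin x)
  -- integrability
  have hgint : Integrable g μ := hgL2.integrable one_le_two
  have hsqint : Integrable (fun w => ‖g w‖ ^ 2) μ := hgL2.norm.integrable_sq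
  have hinner_int : Integrable (fun w => ⟪c, g w⟫) μ := hgint.const_inner c
  -- expansion of the integral
  have hexp : ∫ w, ‖(x - e - γ • g w) - xstar‖ ^ 2 ∂μ
      = ‖c‖ ^ 2 - 2 * γ * ⟪c, f' x⟫ + γ ^ 2 * ∫ w, ‖g w‖ ^ 2 ∂μ := by
    have hptw : ∀ w, ‖(x - e - γ • g w) - xstar‖ ^ 2
        = ‖c‖ ^ 2 - 2 * γ * ⟪c, g w⟫ + γ ^ 2 * ‖g w‖ ^ 2 := by
      intro w
      have : (x - e - γ • g w) - xstar = c - γ • g w := by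
        rw [hc]; abel
      rw [this, norm_sub_sq_real, real_inner_smul_right, norm_smul, Real.norm_eq_abs,
        mul_pow, sq_abs]
      ring
    have i1 : Integrable (fun w => ‖c‖ ^ 2 - 2 * γ * ⟪c, g w⟫) μ :=
      (integrable_const _).sub (hinner_int.const_mul (2 * γ))
    have i2 : Integrable (fun w => γ ^ 2 * ‖g w‖ ^ 2) μ := hsqint.const_mul (γ ^ 2)
    simp_rw [hptw]
    rw [integral_add i1 i2, integral_sub (integrable_const _) (hinner_int.const_mul (2 * γ)),
      integral_const, integral_const_mul, integral_const_mul, integral_inner hgint, hunb]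
    simp
  rw [hexp]
  -- gradient norm bound: ‖f' x‖² ≤ 2 L F
  have hB : ‖f' x‖ ^ 2 ≤ 2 * L * F := by
    have hd := descent_lemma_s19 L hL f f' hgrad hlip x (x - (1 / L) • f' x)
    have harg : (x - (1 / L) • f' x) - x = -((1 / L) • f' x) := by abel
    rw [harg] at hd
    have h1 : ⟪f' x, -((1 / L) • f' x)⟫ = -(1 / L) * ‖f' x‖ ^ 2 := by
      rw [inner_neg_right, real_inner_smul_right, real_inner_self_eq_norm_sq]
      ring
    have h2 : ‖-((1 / L) • f' x)‖ ^ 2 = (1 / L) ^ 2 * ‖f' x‖ ^ 2 := by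
      rw [norm_neg, norm_smul]
      simp [abs_of_pos (by positivity : (0:ℝ) < 1 / L), mul_pow]
    rw [h1, h2] at hd
    have hmin' := hmin (x - (1 / L) • f' x)
    have hL' : L ≠ 0 := ne_of_gt hL
    have heq : -(1 / L) * ‖f' x‖ ^ 2 + L / 2 * ((1 / L) ^ 2 * ‖f' x‖ ^ 2)
        = -(1 / (2 * L) * ‖f' x‖ ^ 2) := by
      field_simp
      ring
    have key : f xstar ≤ f x - 1 / (2 * L) * ‖f' x‖ ^ 2 := by linarith [le_trans hmin' hd, heq]
    have h2L : (0:ℝ) < 2 * L := by positivity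
    have hmul := mul_le_mul_of_nonneg_left
      (show 1 / (2 * L) * ‖f' x‖ ^ 2 ≤ F by rw [hFdef]; linarith) h2L.le
    have hid : (2 * L) * (1 / (2 * L) * ‖f' x‖ ^ 2) = ‖f' x‖ ^ 2 := by
      field_simp
    linarith [hid ▸ hmul]
  -- quasi strong convexity at x
  have hq : F + m / 2 * ‖x - xstar‖ ^ 2 ≤ ⟪f' x, x - xstar⟫ := by
    have := hqsc x
    have hns : ⟪f' x, xstar - x⟫ = -⟪f' x, x - xstar⟫ := by
      rw [show xstar - x = -(x - xstar) by abel, inner_neg_right]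
    rw [hns] at this
    rw [hFdef]
    linarith
  -- Young's inequality term
  have hY : ⟪e, f' x⟫ ≤ L * ‖e‖ ^ 2 + F / 2 := by
    have h1 := real_inner_le_norm e (f' x)
    nlinarith [sq_nonneg (2 * L * ‖e‖ - ‖f' x‖), hB, hL, norm_nonneg e, norm_nonneg (f' x)]
  -- split inner product
  have hsplit : ⟪c, f' x⟫ = ⟪f' x, x - xstar⟫ - ⟪e, f' x⟫ := by
    rw [hc, show x - e - xstar = (x - xstar) - e by abel, inner_sub_left,
      real_inner_comm (x - xstar) (f' x)]
  -- triangle-type bound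
  have htri : ‖c‖ ^ 2 ≤ 2 * ‖x - xstar‖ ^ 2 + 2 * ‖e‖ ^ 2 := by
    have h1 : ‖c‖ ≤ ‖x - xstar‖ + ‖e‖ := by
      rw [hc, show x - e - xstar = (x - xstar) - e by abel]
      exact norm_sub_le _ _
    nlinarith [norm_nonneg c, norm_nonneg (x - xstar), norm_nonneg e,
      sq_nonneg (‖x - xstar‖ - ‖e‖)]
  -- step size bound
  have hγA : 2 * A' * γ ≤ 1 / 2 := by
    rw [le_div_iff₀ (by positivity : (0:ℝ) < 4 * A')] at hγ
    nlinarith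
  -- second moment bound
  have hS : γ ^ 2 * ∫ w, ‖g w‖ ^ 2 ∂μ ≤ γ / 2 * F + γ ^ 2 * D₁' := by
    have h1 : γ ^ 2 * ∫ w, ‖g w‖ ^ 2 ∂μ ≤ γ ^ 2 * (2 * A' * F + D₁') := by
      apply mul_le_mul_of_nonneg_left _ (sq_nonneg γ)
      rw [hFdef]; exact hsec
    have hγF : 0 ≤ γ * F := mul_nonneg hγ0.le hF
    nlinarith [mul_le_mul_of_nonneg_right hγA hγF, h1]
  -- combine
  have h1 : γ * (F + m / 2 * ‖x - xstar‖ ^ 2) ≤ γ * ⟪f' x, x - xstar⟫ :=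
    mul_le_mul_of_nonneg_left hq hγ0.le
  have h2 : γ * ⟪e, f' x⟫ ≤ γ * (L * ‖e‖ ^ 2 + F / 2) :=
    mul_le_mul_of_nonneg_left hY hγ0.le
  have h3 : γ * m / 2 * ‖c‖ ^ 2 ≤ γ * m / 2 * (2 * ‖x - xstar‖ ^ 2 + 2 * ‖e‖ ^ 2) :=
    mul_le_mul_of_nonneg_left htri (by positivity)
  have hsplit' : γ * ⟪c, f' x⟫ = γ * ⟪f' x, x - xstar⟫ - γ * ⟪e, f' x⟫ := by
    rw [hsplit]; ring
  ring_nf at h1 h2 h3 hS hsplit' ⊢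
  linarith [h1, h2, h3, hS, hsplit']
end
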